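/- arXiv:2602.24189 — 4 statements merged into one kernel-verified Lean document; each statement's English description precedes it below -/
import Mathlib

section
/- Let (Ω, F, P) be a probability space and let {H_θ}_{θ>0} be a family of random variables such that (θ, ω) ↦ H_θ(ω) is jointly measurable, |H_θ| ≤ M almost surely for some constant M > 0 independent of θ, and such that there exist constants C, β₁, β₂ > 0 with |E[H_θ H_w]| ≤ C[(θ/w)^{β₁} + (θ/w)^{β₂}] for all 0 < θ < w. Then L_T := (1/log T) ∫₁^T (1/θ) H_θ dθ converges to 0 almost surely as T → ∞. -/
open MeasureTheory Filter
open Set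

lemma lemA {a b β : ℝ} (ha : 0 < a) (hab : a ≤ b) (hβ : 0 < β) :
    ∫ w in Set.Ioc a b, w⁻¹ * (w / b) ^ β ≤ β⁻¹ := by
  have hb : 0 < b := lt_of_lt_of_le ha hab
  have heq : Set.EqOn (fun w : ℝ => w⁻¹ * (w / b) ^ β)
      (fun w : ℝ => b ^ (-β) * w ^ (β - 1)) (Set.Ioc a b) := by
    intro w hw
    have hw0 : 0 < w := lt_trans ha hw.1
    simp only
    rw [Real.rpow_neg hb.le, Real.rpow_sub hw0, Real.rpow_one,
      Real.div_rpow hw0.le hb.le]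
    field_simp
  rw [setIntegral_congr_fun measurableSet_Ioc heq, ← intervalIntegral.integral_of_le hab,
    intervalIntegral.integral_const_mul, integral_rpow (Or.inl (by linarith))]
  have h1 : β - 1 + 1 = β := by ring
  rw [h1]
  have h2 : b ^ (-β) * b ^ β = 1 := by
    rw [← Real.rpow_add hb]; simp
  have h3 : a ^ β ≥ 0 := Real.rpow_nonneg ha.le β
  have h4 : (0:ℝ) ≤ b ^ (-β) := Real.rpow_nonneg hb.le _
  calc b ^ (-β) * ((b ^ β - a ^ β) / β) ≤ b ^ (-β) * (b ^ β / β) := by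
        apply mul_le_mul_of_nonneg_left _ h4
        gcongr
        linarith
    _ = β⁻¹ := by rw [mul_div_assoc', h2, one_div]

lemma lemB {a b β : ℝ} (ha : 0 < a) (hab : a ≤ b) (hβ : 0 < β) :
    ∫ w in Set.Ioc a b, w⁻¹ * (a / w) ^ β ≤ β⁻¹ := by
  have hb : 0 < b := lt_of_lt_of_le ha hab
  have heq : Set.EqOn (fun w : ℝ => w⁻¹ * (a / w) ^ β)
      (fun w : ℝ => a ^ β * w ^ (-β - 1)) (Set.Ioc a b) := by
    intro w hw
    have hw0 : 0 < w := lt_trans ha hw.1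
    simp only
    rw [Real.rpow_sub hw0, Real.rpow_one, Real.rpow_neg hw0.le,
      Real.div_rpow ha.le hw0.le]
    field_simp
  rw [setIntegral_congr_fun measurableSet_Ioc heq, ← intervalIntegral.integral_of_le hab,
    intervalIntegral.integral_const_mul,
    integral_rpow (Or.inr ⟨by intro h; nlinarith, notMem_uIcc_of_lt ha hb⟩)]
  have h1 : -β - 1 + 1 = -β := by ring
  rw [h1]
  have h2 : a ^ β * a ^ (-β) = 1 := by rw [← Real.rpow_add ha]; simp
  have h3 : (0:ℝ) ≤ b ^ (-β) := Real.rpow_nonneg hb.le _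
  have h4 : (0:ℝ) ≤ a ^ β := Real.rpow_nonneg ha.le _
  calc a ^ β * ((b ^ (-β) - a ^ (-β)) / -β) = a ^ β * ((a ^ (-β) - b ^ (-β)) / β) := by
        ring
    _ ≤ a ^ β * (a ^ (-β) / β) := by
        apply mul_le_mul_of_nonneg_left _ h4
        gcongr
        linarith
    _ = β⁻¹ := by rw [mul_div_assoc', h2, one_div]

/-- Integrable from a.e. bound on finite measure space. -/
lemma int_of_bdd {α : Type*} [MeasurableSpace α] {μ : Measure α} [IsFiniteMeasure μ]
    {f : α → ℝ} (hf : AEStronglyMeasurable f μ) {c : ℝ} (h : ∀ᵐ a ∂μ, |f a| ≤ c) :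
    Integrable f μ :=
  (integrable_const c).mono' hf (by simpa [Real.norm_eq_abs] using h)

section Aux
variable {Ω : Type*} [MeasurableSpace Ω] (P : Measure Ω) [IsProbabilityMeasure P]
  (H : ℝ → Ω → ℝ)

set_option maxHeartbeats 2000000 in
theorem aux (hmeas : Measurable (Function.uncurry H))
    (M : ℝ) (hM : 0 < M)
    (hbd : ∀ θ ω, |H θ ω| ≤ M)
    (C β₁ β₂ : ℝ) (hC : 0 < C) (hβ₁ : 0 < β₁) (hβ₂ : 0 < β₂)
    (hcov : ∀ θ w : ℝ, 0 < θ → θ < w →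
      |∫ ω, H θ ω * H w ω ∂P| ≤ C * ((θ / w) ^ β₁ + (θ / w) ^ β₂)) :
    ∀ᵐ ω ∂P, Tendsto (fun T : ℝ => (Real.log T)⁻¹ * ∫ θ in Set.Ioc (1 : ℝ) T, θ⁻¹ * H θ ω)
      atTop (nhds 0) := by
  set F : ℝ → Ω → ℝ := fun T ω => ∫ θ in Set.Ioc (1:ℝ) T, θ⁻¹ * H θ ω with hF
  have hHm1 : ∀ ω, Measurable fun θ => H θ ω := fun ω =>
    hmeas.comp (measurable_id.prodMk measurable_const)
  have hHm2 : ∀ θ, Measurable (H θ) := fun θ =>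
    hmeas.comp (measurable_const.prodMk measurable_id)
  -- integrability of the θ-integrand
  have hintOn : ∀ ω T, IntegrableOn (fun θ => θ⁻¹ * H θ ω) (Set.Ioc (1:ℝ) T) volume := by
    intro ω T
    refine int_of_bdd ((measurable_inv.mul (hHm1 ω)).aestronglyMeasurable) (c := M) ?_
    filter_upwards [ae_restrict_mem measurableSet_Ioc] with θ hθ
    have h1 : (0:ℝ) < θ := lt_trans one_pos hθ.1
    have h2 : θ⁻¹ ≤ 1 := by rw [inv_le_one_iff₀]; right; exact hθ.1.le
    calc |θ⁻¹ * H θ ω| = θ⁻¹ * |H θ ω| := by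
          rw [abs_mul, abs_of_pos (inv_pos.mpr h1)]
      _ ≤ 1 * M := by
          apply mul_le_mul h2 (hbd θ ω) (abs_nonneg _) zero_le_one
      _ = M := one_mul M
  -- |F T ω| ≤ M log T
  have hlogint : ∀ S T : ℝ, 1 ≤ S → S ≤ T →
      ∫ θ in Set.Ioc S T, M * θ⁻¹ = M * (Real.log T - Real.log S) := by
    intro S T hS hST
    rw [← intervalIntegral.integral_of_le hST, intervalIntegral.integral_const_mul,
      integral_inv_of_pos (lt_of_lt_of_le one_pos hS) (lt_of_lt_of_le one_pos (hS.trans hST)),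
      Real.log_div (by intro h; rw [h] at hST; linarith) (by intro h; rw [h] at hS; linarith)]
  have hFdiff : ∀ ω (S T : ℝ), 1 ≤ S → S ≤ T →
      |F T ω - F S ω| ≤ M * (Real.log T - Real.log S) := by
    intro ω S T hS hST
    have hsub : Set.Ioc (1:ℝ) T = Set.Ioc 1 S ∪ Set.Ioc S T := by
      rw [Set.Ioc_union_Ioc_eq_Ioc hS hST]
    have hdisj : Disjoint (Set.Ioc (1:ℝ) S) (Set.Ioc S T) := (Set.Ioc_disjoint_Ioc_of_le le_rfl)
    have : F T ω = F S ω + ∫ θ in Set.Ioc S T, θ⁻¹ * H θ ω := by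
      rw [hF]; simp only
      rw [hsub, setIntegral_union hdisj measurableSet_Ioc
        ((hintOn ω T).mono_set (by rw [hsub]; exact Set.subset_union_left))
        ((hintOn ω T).mono_set (by rw [hsub]; exact Set.subset_union_right))]
    rw [this, add_sub_cancel_left]
    calc |∫ θ in Set.Ioc S T, θ⁻¹ * H θ ω| ≤ ∫ θ in Set.Ioc S T, M * θ⁻¹ := by
          rw [← Real.norm_eq_abs]
          apply norm_integral_le_of_norm_le
          · refine int_of_bdd (measurable_const.mul measurable_inv).aestronglyMeasurable (c := M) ?_
            filter_upwards [ae_restrict_mem measurableSet_Ioc] with θ hθ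
            have h1 : (0:ℝ) < θ := lt_of_lt_of_le (lt_of_lt_of_le one_pos hS) hθ.1.le
            have : θ⁻¹ ≤ 1 := by
              rw [inv_le_one_iff₀]; right; exact le_trans hS hθ.1.le
            calc |M * θ⁻¹| = M * θ⁻¹ := abs_of_nonneg (by positivity)
              _ ≤ M * 1 := by nlinarith [inv_pos.mpr h1]
              _ = M := mul_one M
          · filter_upwards [ae_restrict_mem measurableSet_Ioc] with θ hθ
            have h1 : (0:ℝ) < θ := lt_of_lt_of_le (lt_of_lt_of_le one_pos hS) hθ.1.le
            rw [Real.norm_eq_abs, abs_mul, abs_of_pos (inv_pos.mpr h1), mul_comm]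
            exact mul_le_mul_of_nonneg_right (hbd θ ω) (inv_pos.mpr h1).le
      _ = M * (Real.log T - Real.log S) := hlogint S T hS hST
  have hFbd : ∀ ω (T : ℝ), 1 ≤ T → |F T ω| ≤ M * Real.log T := by
    intro ω T hT
    have := hFdiff ω 1 T le_rfl hT
    simpa [hF] using this
  -- measurability of F T
  have hFm : ∀ T : ℝ, StronglyMeasurable (F T) := by
    intro T
    have hf : StronglyMeasurable (fun p : Ω × ℝ => (p.2)⁻¹ * H p.2 p.1) := by
      apply Measurable.stronglyMeasurable
      exact (measurable_snd.inv).mul (hmeas.comp (measurable_snd.prodMk measurable_fst))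
    exact hf.integral_prod_right' (ν := volume.restrict (Set.Ioc 1 T))
  -- the correlation function
  set G : ℝ → ℝ → ℝ := fun θ w => ∫ ω, H θ ω * H w ω ∂P with hG
  have hGm : ∀ θ, StronglyMeasurable (fun w => G θ w) := by
    intro θ
    have hf : StronglyMeasurable (fun p : ℝ × Ω => H θ p.2 * H p.1 p.2) := by
      apply Measurable.stronglyMeasurable
      exact ((hHm2 θ).comp measurable_snd).mul (hmeas.comp measurable_id)
    exact hf.integral_prod_right' (ν := P)
  have hGbd : ∀ θ w, |G θ w| ≤ M * M := by
    intro θ w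
    rw [← Real.norm_eq_abs]
    calc ‖G θ w‖ ≤ ∫ ω, M * M ∂P := by
          apply norm_integral_le_of_norm_le (integrable_const _)
          filter_upwards with ω
          rw [Real.norm_eq_abs, abs_mul]
          exact mul_le_mul (hbd θ ω) (hbd w ω) (abs_nonneg _) hM.le
      _ = M * M := by simp
  have hGsymm : ∀ θ w, G θ w = G w θ := by
    intro θ w; rw [hG]; simp only [mul_comm]
  -- the one-sided correlation integral bounds
  have hpart1 : ∀ θ : ℝ, 1 ≤ θ →
      ‖∫ w in Set.Ioc (1:ℝ) θ, w⁻¹ * G θ w‖ ≤ C * β₁⁻¹ + C * β₂⁻¹ := by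
    intro θ hθ
    have hθ0 : (0:ℝ) < θ := lt_of_lt_of_le one_pos hθ
    set g : ℝ → ℝ := fun w => C * (w⁻¹ * (w / θ) ^ β₁) + C * (w⁻¹ * (w / θ) ^ β₂) with hg
    have hint : ∀ β : ℝ, 0 < β →
        IntegrableOn (fun w => w⁻¹ * (w / θ) ^ β) (Set.Ioc (1:ℝ) θ) volume := by
      intro β hβ
      refine int_of_bdd (Measurable.aestronglyMeasurable (measurable_inv.mul
        (((Real.continuous_rpow_const hβ.le).comp (continuous_id.div_const θ)).measurable)))
        (c := 1) ?_
      filter_upwards [ae_restrict_mem measurableSet_Ioc] with w hw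
      have hw0 : (0:ℝ) < w := lt_trans one_pos hw.1
      have h1 : w⁻¹ ≤ 1 := by rw [inv_le_one_iff₀]; right; exact hw.1.le
      have h2 : (w / θ) ^ β ≤ 1 :=
        Real.rpow_le_one (by positivity) (by rw [div_le_one hθ0]; exact hw.2) hβ.le
      rw [abs_of_nonneg (by positivity)]
      calc w⁻¹ * (w/θ)^β ≤ 1 * 1 := by
            apply mul_le_mul h1 h2 (by positivity) zero_le_one
        _ = 1 := one_mul 1
    calc ‖∫ w in Set.Ioc (1:ℝ) θ, w⁻¹ * G θ w‖ ≤ ∫ w in Set.Ioc (1:ℝ) θ, g w := by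
          apply norm_integral_le_of_norm_le
          · exact ((hint β₁ hβ₁).const_mul C).add ((hint β₂ hβ₂).const_mul C)
          · have hne : ∀ᵐ w ∂(volume.restrict (Set.Ioc (1:ℝ) θ)), w ≠ θ := by
              refine ae_iff.mpr ?_
              have : {w : ℝ | ¬ w ≠ θ} = {θ} := by ext w; simp
              rw [this]
              exact le_antisymm (le_trans (Measure.restrict_apply_le _ _)
                (le_of_eq (Real.volume_singleton))) zero_le
            filter_upwards [ae_restrict_mem measurableSet_Ioc, hne] with w hw hwθ
            have hw0 : (0:ℝ) < w := lt_trans one_pos hw.1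
            have hwθ' : w < θ := lt_of_le_of_ne hw.2 hwθ
            rw [Real.norm_eq_abs, abs_mul, abs_of_pos (inv_pos.mpr hw0), hGsymm]
            calc w⁻¹ * |G w θ| ≤ w⁻¹ * (C * ((w/θ)^β₁ + (w/θ)^β₂)) :=
                  mul_le_mul_of_nonneg_left (hcov w θ hw0 hwθ') (inv_pos.mpr hw0).le
              _ = g w := by rw [hg]; ring
      _ = (C * ∫ w in Set.Ioc (1:ℝ) θ, w⁻¹ * (w/θ)^β₁)
          + C * ∫ w in Set.Ioc (1:ℝ) θ, w⁻¹ * (w/θ)^β₂ := by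
          rw [hg, integral_add ((hint β₁ hβ₁).const_mul C) ((hint β₂ hβ₂).const_mul C),
            integral_const_mul, integral_const_mul]
      _ ≤ C * β₁⁻¹ + C * β₂⁻¹ :=
          add_le_add (mul_le_mul_of_nonneg_left (lemA one_pos hθ hβ₁) hC.le)
            (mul_le_mul_of_nonneg_left (lemA one_pos hθ hβ₂) hC.le)
  have hpart2 : ∀ θ T : ℝ, 0 < θ → θ ≤ T →
      ‖∫ w in Set.Ioc θ T, w⁻¹ * G θ w‖ ≤ C * β₁⁻¹ + C * β₂⁻¹ := by
    intro θ T hθ0 hθT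
    set g : ℝ → ℝ := fun w => C * (w⁻¹ * (θ / w) ^ β₁) + C * (w⁻¹ * (θ / w) ^ β₂) with hg
    have hint : ∀ β : ℝ, 0 < β →
        IntegrableOn (fun w => w⁻¹ * (θ / w) ^ β) (Set.Ioc θ T) volume := by
      intro β hβ
      refine int_of_bdd (Measurable.aestronglyMeasurable (measurable_inv.mul
        ((Real.continuous_rpow_const hβ.le).measurable.comp
          (measurable_const.div measurable_id)))) (c := θ⁻¹) ?_
      filter_upwards [ae_restrict_mem measurableSet_Ioc] with w hw
      have hw0 : (0:ℝ) < w := lt_trans hθ0 hw.1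
      have h1 : w⁻¹ ≤ θ⁻¹ := by
        apply inv_anti₀ hθ0 hw.1.le
      have h2 : (θ / w) ^ β ≤ 1 :=
        Real.rpow_le_one (by positivity) (by rw [div_le_one hw0]; exact hw.1.le) hβ.le
      rw [abs_of_nonneg (by positivity)]
      calc w⁻¹ * (θ/w)^β ≤ θ⁻¹ * 1 := by
            apply mul_le_mul h1 h2 (by positivity) (by positivity)
        _ = θ⁻¹ := mul_one _
    calc ‖∫ w in Set.Ioc θ T, w⁻¹ * G θ w‖ ≤ ∫ w in Set.Ioc θ T, g w := by
          apply norm_integral_le_of_norm_le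
          · exact ((hint β₁ hβ₁).const_mul C).add ((hint β₂ hβ₂).const_mul C)
          · filter_upwards [ae_restrict_mem measurableSet_Ioc] with w hw
            have hw0 : (0:ℝ) < w := lt_trans hθ0 hw.1
            rw [Real.norm_eq_abs, abs_mul, abs_of_pos (inv_pos.mpr hw0)]
            calc w⁻¹ * |G θ w| ≤ w⁻¹ * (C * ((θ/w)^β₁ + (θ/w)^β₂)) :=
                  mul_le_mul_of_nonneg_left (hcov θ w hθ0 hw.1) (inv_pos.mpr hw0).le
              _ = g w := by rw [hg]; ring
      _ = (C * ∫ w in Set.Ioc θ T, w⁻¹ * (θ/w)^β₁)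
          + C * ∫ w in Set.Ioc θ T, w⁻¹ * (θ/w)^β₂ := by
          rw [hg, integral_add ((hint β₁ hβ₁).const_mul C) ((hint β₂ hβ₂).const_mul C),
            integral_const_mul, integral_const_mul]
      _ ≤ C * β₁⁻¹ + C * β₂⁻¹ :=
          add_le_add (mul_le_mul_of_nonneg_left (lemB hθ0 hθT hβ₁) hC.le)
            (mul_le_mul_of_nonneg_left (lemB hθ0 hθT hβ₂) hC.le)
  -- product a.e. membership
  have hprodae : ∀ (s : Set ℝ), MeasurableSet s →
      ∀ᵐ p ∂(P.prod (volume.restrict s)), p.2 ∈ s := by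
    intro s hs
    rw [ae_iff]
    have h : {p : Ω × ℝ | ¬ p.2 ∈ s} = Set.univ ×ˢ sᶜ := by ext p; simp
    rw [h, Measure.prod_prod, Measure.restrict_apply hs.compl]
    simp
  have hinner : ∀ T θ : ℝ, 1 < θ → θ ≤ T →
      |∫ ω, H θ ω * F T ω ∂P| ≤ 2 * (C * β₁⁻¹ + C * β₂⁻¹) := by
    intro T θ hθ1 hθT
    have hθ0 : (0:ℝ) < θ := lt_trans one_pos hθ1
    have h1T : (1:ℝ) ≤ T := le_trans hθ1.le hθT
    have hswap : ∫ ω, H θ ω * F T ω ∂P = ∫ w in Set.Ioc (1:ℝ) T, w⁻¹ * G θ w := by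
      have h1 : ∀ ω, H θ ω * F T ω = ∫ w in Set.Ioc (1:ℝ) T, H θ ω * (w⁻¹ * H w ω) := by
        intro ω
        rw [hF]; simp only
        exact (integral_const_mul (H θ ω) _).symm
      calc ∫ ω, H θ ω * F T ω ∂P
          = ∫ ω, (∫ w in Set.Ioc (1:ℝ) T, H θ ω * (w⁻¹ * H w ω)) ∂P := by
            simp_rw [h1]
        _ = ∫ w in Set.Ioc (1:ℝ) T, ∫ ω, H θ ω * (w⁻¹ * H w ω) ∂P := by
            apply integral_integral_swap
            apply int_of_bdd (c := M * M)
            · apply Measurable.aestronglyMeasurable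
              exact ((hHm2 θ).comp measurable_fst).mul ((measurable_snd.inv).mul
                (hmeas.comp (measurable_snd.prodMk measurable_fst)))
            · filter_upwards [hprodae _ measurableSet_Ioc] with p hp
              have hw0 : (0:ℝ) < p.2 := lt_trans one_pos hp.1
              have hwi : (p.2)⁻¹ ≤ 1 := by rw [inv_le_one_iff₀]; right; exact hp.1.le
              simp only [Function.uncurry]
              rw [abs_mul, abs_mul, abs_of_pos (inv_pos.mpr hw0)]
              calc |H θ p.1| * ((p.2)⁻¹ * |H p.2 p.1|) ≤ M * (1 * M) := by
                    apply mul_le_mul (hbd _ _) ?_ (by positivity) hM.le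
                    apply mul_le_mul hwi (hbd _ _) (abs_nonneg _) zero_le_one
                _ = M * M := by ring
        _ = ∫ w in Set.Ioc (1:ℝ) T, w⁻¹ * G θ w := by
            apply setIntegral_congr_fun measurableSet_Ioc
            intro w hw
            simp only [hG]
            rw [← integral_const_mul]
            congr 1; ext ω; ring
    have hGint : IntegrableOn (fun w => w⁻¹ * G θ w) (Set.Ioc (1:ℝ) T) volume := by
      refine int_of_bdd ((measurable_inv.mul (hGm θ).measurable).aestronglyMeasurable)
        (c := M * M) ?_
      filter_upwards [ae_restrict_mem measurableSet_Ioc] with w hw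
      have hw0 : (0:ℝ) < w := lt_trans one_pos hw.1
      have hwi : w⁻¹ ≤ 1 := by rw [inv_le_one_iff₀]; right; exact hw.1.le
      rw [abs_mul, abs_of_pos (inv_pos.mpr hw0)]
      calc w⁻¹ * |G θ w| ≤ 1 * (M * M) :=
            mul_le_mul hwi (hGbd θ w) (abs_nonneg _) zero_le_one
        _ = M * M := one_mul _
    have hsub : Set.Ioc (1:ℝ) T = Set.Ioc 1 θ ∪ Set.Ioc θ T :=
      (Set.Ioc_union_Ioc_eq_Ioc hθ1.le hθT).symm
    rw [hswap, ← Real.norm_eq_abs, hsub,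
      setIntegral_union (Set.Ioc_disjoint_Ioc_of_le le_rfl) measurableSet_Ioc
        (hGint.mono_set (by rw [hsub]; exact Set.subset_union_left))
        (hGint.mono_set (by rw [hsub]; exact Set.subset_union_right))]
    calc ‖(∫ w in Set.Ioc (1:ℝ) θ, w⁻¹ * G θ w) + ∫ w in Set.Ioc θ T, w⁻¹ * G θ w‖
        ≤ ‖∫ w in Set.Ioc (1:ℝ) θ, w⁻¹ * G θ w‖ + ‖∫ w in Set.Ioc θ T, w⁻¹ * G θ w‖ :=
          norm_add_le _ _
      _ ≤ (C * β₁⁻¹ + C * β₂⁻¹) + (C * β₁⁻¹ + C * β₂⁻¹) :=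
          add_le_add (hpart1 θ hθ1.le) (hpart2 θ T hθ0 hθT)
      _ = 2 * (C * β₁⁻¹ + C * β₂⁻¹) := by ring
  -- second moment bound
  have hloggen : ∀ c S T : ℝ, 1 ≤ S → S ≤ T →
      ∫ θ in Set.Ioc S T, c * θ⁻¹ = c * (Real.log T - Real.log S) := by
    intro c S T hS hST
    rw [← intervalIntegral.integral_of_le hST, intervalIntegral.integral_const_mul,
      integral_inv_of_pos (lt_of_lt_of_le one_pos hS) (lt_of_lt_of_le one_pos (hS.trans hST)),
      Real.log_div (by intro h; rw [h] at hST; linarith) (by intro h; rw [h] at hS; linarith)]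
  have hvar : ∀ T : ℝ, 1 ≤ T →
      ∫ ω, (F T ω)^2 ∂P ≤ (2 * (C * β₁⁻¹ + C * β₂⁻¹)) * Real.log T := by
    intro T hT
    have hlogT : 0 ≤ Real.log T := Real.log_nonneg hT
    have h1 : ∀ ω, (F T ω)^2 = ∫ θ in Set.Ioc (1:ℝ) T, (θ⁻¹ * H θ ω) * F T ω := by
      intro ω
      rw [sq]
      exact (integral_mul_const (F T ω) _).symm
    have hswap2 : ∫ ω, (F T ω)^2 ∂P
        = ∫ θ in Set.Ioc (1:ℝ) T, ∫ ω, (θ⁻¹ * H θ ω) * F T ω ∂P := by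
      calc ∫ ω, (F T ω)^2 ∂P
          = ∫ ω, (∫ θ in Set.Ioc (1:ℝ) T, (θ⁻¹ * H θ ω) * F T ω) ∂P := by simp_rw [h1]
        _ = ∫ θ in Set.Ioc (1:ℝ) T, ∫ ω, (θ⁻¹ * H θ ω) * F T ω ∂P := by
            apply integral_integral_swap
            apply int_of_bdd (c := M * (M * Real.log T))
            · apply Measurable.aestronglyMeasurable
              exact ((measurable_snd.inv.mul
                (hmeas.comp (measurable_snd.prodMk measurable_fst))).mul
                ((hFm T).measurable.comp measurable_fst))
            · filter_upwards [hprodae _ measurableSet_Ioc] with p hp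
              have hw0 : (0:ℝ) < p.2 := lt_trans one_pos hp.1
              have hwi : (p.2)⁻¹ ≤ 1 := by rw [inv_le_one_iff₀]; right; exact hp.1.le
              simp only [Function.uncurry]
              rw [abs_mul, abs_mul, abs_of_pos (inv_pos.mpr hw0)]
              calc (p.2)⁻¹ * |H p.2 p.1| * |F T p.1| ≤ 1 * M * (M * Real.log T) := by
                    apply mul_le_mul ?_ (hFbd p.1 T hT) (abs_nonneg _) (by positivity)
                    exact mul_le_mul hwi (hbd _ _) (abs_nonneg _) zero_le_one
                _ = M * (M * Real.log T) := by ring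
    rw [hswap2]
    have key : ‖∫ θ in Set.Ioc (1:ℝ) T, ∫ ω, (θ⁻¹ * H θ ω) * F T ω ∂P‖
        ≤ ∫ θ in Set.Ioc (1:ℝ) T, (2 * (C * β₁⁻¹ + C * β₂⁻¹)) * θ⁻¹ := by
      apply norm_integral_le_of_norm_le
      · exact int_of_bdd (measurable_const.mul measurable_inv).aestronglyMeasurable
          (c := 2 * (C * β₁⁻¹ + C * β₂⁻¹)) (by
            filter_upwards [ae_restrict_mem measurableSet_Ioc] with θ hθ
            have hθ0 : (0:ℝ) < θ := lt_trans one_pos hθ.1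
            have hθi : θ⁻¹ ≤ 1 := by rw [inv_le_one_iff₀]; right; exact hθ.1.le
            rw [abs_of_nonneg (by positivity)]
            calc (2 * (C * β₁⁻¹ + C * β₂⁻¹)) * θ⁻¹ ≤ (2 * (C * β₁⁻¹ + C * β₂⁻¹)) * 1 := by
                  apply mul_le_mul_of_nonneg_left hθi (by positivity)
              _ = 2 * (C * β₁⁻¹ + C * β₂⁻¹) := mul_one _)
      · filter_upwards [ae_restrict_mem measurableSet_Ioc] with θ hθ
        have hθ0 : (0:ℝ) < θ := lt_trans one_pos hθ.1
        have heq : ∫ ω, (θ⁻¹ * H θ ω) * F T ω ∂P = θ⁻¹ * ∫ ω, H θ ω * F T ω ∂P := by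
          rw [← integral_const_mul]
          congr 1; ext ω; ring
        rw [Real.norm_eq_abs, heq, abs_mul, abs_of_pos (inv_pos.mpr hθ0), mul_comm]
        exact mul_le_mul_of_nonneg_right (hinner T θ hθ.1 hθ.2) (inv_pos.mpr hθ0).le
    calc ∫ θ in Set.Ioc (1:ℝ) T, ∫ ω, (θ⁻¹ * H θ ω) * F T ω ∂P
        ≤ ‖∫ θ in Set.Ioc (1:ℝ) T, ∫ ω, (θ⁻¹ * H θ ω) * F T ω ∂P‖ := le_abs_self _
      _ ≤ ∫ θ in Set.Ioc (1:ℝ) T, (2 * (C * β₁⁻¹ + C * β₂⁻¹)) * θ⁻¹ := key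
      _ = (2 * (C * β₁⁻¹ + C * β₂⁻¹)) * Real.log T := by
          rw [hloggen _ 1 T le_rfl hT, Real.log_one, sub_zero]
  -- the subsequence
  set e : ℕ → ℝ := fun k => Real.exp (((k:ℝ)+1)^2) with he
  have he1 : ∀ k, 1 ≤ e k := fun k => Real.one_le_exp (by positivity)
  have hloge : ∀ k, Real.log (e k) = ((k:ℝ)+1)^2 := fun k => Real.log_exp _
  set L : ℕ → Ω → ℝ := fun k ω => ((((k:ℝ)+1)^2)⁻¹) * F (e k) ω with hL
  have hLbd : ∀ k ω, |L k ω| ≤ M := by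
    intro k ω
    rw [hL]; simp only
    rw [abs_mul, abs_of_pos (by positivity : (0:ℝ) < (((k:ℝ)+1)^2)⁻¹)]
    have h1 : |F (e k) ω| ≤ M * ((k:ℝ)+1)^2 := by
      calc |F (e k) ω| ≤ M * Real.log (e k) := hFbd ω (e k) (he1 k)
        _ = M * ((k:ℝ)+1)^2 := by rw [hloge]
    calc (((k:ℝ)+1)^2)⁻¹ * |F (e k) ω| ≤ (((k:ℝ)+1)^2)⁻¹ * (M * ((k:ℝ)+1)^2) :=
          mul_le_mul_of_nonneg_left h1 (by positivity)
      _ = M := by field_simp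
  have hLint : ∀ k, Integrable (fun ω => (L k ω)^2) P := by
    intro k
    refine int_of_bdd
      ((((hFm (e k)).measurable.const_mul _).pow_const 2).aestronglyMeasurable) (c := M^2) ?_
    filter_upwards with ω
    rw [abs_of_nonneg (sq_nonneg _), ← sq_abs]
    exact pow_le_pow_left₀ (abs_nonneg _) (hLbd k ω) 2
  have hL2 : ∀ k, ∫ ω, (L k ω)^2 ∂P
      ≤ (2 * (C * β₁⁻¹ + C * β₂⁻¹)) / ((k:ℝ)+1)^2 := by
    intro k
    have h1 : ∀ ω, (L k ω)^2 = ((((k:ℝ)+1)^2)⁻¹)^2 * (F (e k) ω)^2 := by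
      intro ω; rw [hL]; ring
    calc ∫ ω, (L k ω)^2 ∂P = ((((k:ℝ)+1)^2)⁻¹)^2 * ∫ ω, (F (e k) ω)^2 ∂P := by
          simp_rw [h1]; exact integral_const_mul _ _
      _ ≤ ((((k:ℝ)+1)^2)⁻¹)^2 * ((2 * (C * β₁⁻¹ + C * β₂⁻¹)) * Real.log (e k)) :=
          mul_le_mul_of_nonneg_left (hvar (e k) (he1 k)) (by positivity)
      _ = (2 * (C * β₁⁻¹ + C * β₂⁻¹)) / ((k:ℝ)+1)^2 := by
          rw [hloge]
          have : ((k:ℝ)+1)^2 ≠ 0 := by positivity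
          field_simp
  -- almost sure convergence along the subsequence
  have hLae : ∀ᵐ ω ∂P, Tendsto (fun k => L k ω) atTop (nhds 0) := by
    set u : ℕ → Ω → ENNReal := fun k ω => ENNReal.ofReal ((L k ω)^2) with hu
    have hum : ∀ k, Measurable (u k) :=
      fun k => (((hFm (e k)).measurable.const_mul _).pow_const 2).ennreal_ofReal
    have hsummable : Summable (fun k : ℕ => (2 * (C * β₁⁻¹ + C * β₂⁻¹)) / ((k:ℝ)+1)^2) := by
      have h0 : Summable (fun k : ℕ => 1 / ((k:ℝ))^2) :=
        Real.summable_one_div_nat_pow.mpr one_lt_two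
      have h1 : Summable (fun k : ℕ => 1 / (((k+1:ℕ)):ℝ)^2) :=
        h0.comp_injective (add_left_injective 1)
      have h2 := h1.mul_left (2 * (C * β₁⁻¹ + C * β₂⁻¹))
      apply h2.congr
      intro k
      push_cast
      ring
    have hfin : ∑' k, ∫⁻ ω, u k ω ∂P ≠ ⊤ := by
      have hle : ∀ k, ∫⁻ ω, u k ω ∂P
          ≤ ENNReal.ofReal ((2 * (C * β₁⁻¹ + C * β₂⁻¹)) / ((k:ℝ)+1)^2) := by
        intro k
        rw [← ofReal_integral_eq_lintegral_ofReal (hLint k)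
          (Filter.Eventually.of_forall fun ω => sq_nonneg _)]
        exact ENNReal.ofReal_le_ofReal (hL2 k)
      apply ne_top_of_le_ne_top _ (ENNReal.tsum_le_tsum hle)
      rw [← ENNReal.ofReal_tsum_of_nonneg (fun k => by positivity) hsummable]
      exact ENNReal.ofReal_ne_top
    have h1 : ∫⁻ ω, (∑' k, u k ω) ∂P ≠ ⊤ := by
      rw [lintegral_tsum (fun k => (hum k).aemeasurable)]
      exact hfin
    have h2 : ∀ᵐ ω ∂P, (∑' k, u k ω) < ⊤ :=
      ae_lt_top (by exact Measurable.ennreal_tsum hum) h1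
    filter_upwards [h2] with ω hω
    have h3 : Tendsto (fun k => u k ω) atTop (nhds 0) :=
      ENNReal.tendsto_atTop_zero_of_tsum_ne_top hω.ne
    have h4 : Tendsto (fun k => (L k ω)^2) atTop (nhds 0) := by
      have h5 := (ENNReal.tendsto_toReal (ENNReal.zero_ne_top)).comp h3
      simp only [ENNReal.toReal_zero] at h5
      apply h5.congr
      intro k
      simp only [Function.comp_apply, hu, ENNReal.toReal_ofReal (sq_nonneg _)]
    rw [tendsto_zero_iff_abs_tendsto_zero]
    have h6 := (Real.continuous_sqrt.tendsto 0).comp h4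
    rw [Real.sqrt_zero] at h6
    apply h6.congr
    intro k
    simp only [Function.comp_apply, Real.sqrt_sq_eq_abs]
  -- gap filling
  filter_upwards [hLae] with ω hω
  rw [Metric.tendsto_atTop]
  intro ε hε
  have hM3 : Tendsto (fun k : ℕ => M * (2*(k:ℝ)+3) / ((k:ℝ)+1)^2) atTop (nhds 0) := by
    apply squeeze_zero (fun k => by positivity) (g := fun k : ℕ => 3*M / ((k:ℝ)+1))
    · intro k
      rw [div_le_div_iff₀ (by positivity) (by positivity)]
      have hk0 : (0:ℝ) ≤ (k:ℝ) := Nat.cast_nonneg k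
      nlinarith [mul_nonneg (mul_nonneg hM.le hk0) (by linarith : (0:ℝ) ≤ (k:ℝ)+1)]
    · have := (tendsto_const_div_atTop_nhds_zero_nat (3*M)).comp (tendsto_add_atTop_nat 1)
      apply this.congr
      intro k
      simp only [Function.comp_apply]
      push_cast
      ring
  have e1 : ∀ᶠ k : ℕ in atTop, |L k ω| < ε/2 := by
    have := hω (Ioo_mem_nhds (by linarith : -(ε/2) < 0) (by linarith : (0:ℝ) < ε/2))
    filter_upwards [this] with k hk
    rw [abs_lt]
    exact ⟨hk.1, hk.2⟩
  have e2 : ∀ᶠ k : ℕ in atTop, M * (2*(k:ℝ)+3) / ((k:ℝ)+1)^2 < ε/2 :=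
    hM3.eventually_lt_const (by linarith)
  obtain ⟨k₀, hk₀⟩ := (e1.and e2).exists_forall_of_atTop
  refine ⟨Real.exp (((k₀:ℝ)+1)^2), fun T hT => ?_⟩
  have hTpos : (0:ℝ) < T := lt_of_lt_of_le (Real.exp_pos _) hT
  have hlogT : ((k₀:ℝ)+1)^2 ≤ Real.log T := by
    rw [← Real.log_exp (((k₀:ℝ)+1)^2)]
    exact Real.log_le_log (Real.exp_pos _) hT
  have hlogT0 : 0 < Real.log T := lt_of_lt_of_le (by positivity) hlogT
  set n := ⌊Real.sqrt (Real.log T)⌋₊ with hn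
  have hsq0 : 0 ≤ Real.sqrt (Real.log T) := Real.sqrt_nonneg _
  have hnlb : ((k₀:ℝ)+1) ≤ Real.sqrt (Real.log T) := by
    rw [show ((k₀:ℝ)+1) = Real.sqrt (((k₀:ℝ)+1)^2) from (Real.sqrt_sq (by positivity)).symm]
    exact Real.sqrt_le_sqrt hlogT
  have hn1 : k₀ + 1 ≤ n := Nat.le_floor (by push_cast; exact hnlb)
  obtain ⟨k, hkn⟩ : ∃ k, n = k + 1 := ⟨n - 1, by omega⟩
  have hkk0 : k₀ ≤ k := by omega
  have hcast : ((n:ℝ)) = (k:ℝ) + 1 := by rw [hkn]; push_cast; ring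
  have hnle : ((n:ℝ))^2 ≤ Real.log T := by
    have h1 : (n:ℝ) ≤ Real.sqrt (Real.log T) := Nat.floor_le hsq0
    calc ((n:ℝ))^2 ≤ (Real.sqrt (Real.log T))^2 := pow_le_pow_left₀ (Nat.cast_nonneg n) h1 2
      _ = Real.log T := Real.sq_sqrt hlogT0.le
  have hngt : Real.log T < ((n:ℝ)+1)^2 := by
    have h1 : Real.sqrt (Real.log T) < (n:ℝ)+1 := Nat.lt_floor_add_one _
    calc Real.log T = (Real.sqrt (Real.log T))^2 := (Real.sq_sqrt hlogT0.le).symm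
      _ < ((n:ℝ)+1)^2 := by nlinarith [hsq0]
  have hlogS : Real.log (e k) = ((n:ℝ))^2 := by rw [hloge, hcast]
  have hS1 : 1 ≤ e k := he1 k
  have hST : e k ≤ T := by
    rw [← Real.exp_log hTpos, he]
    apply Real.exp_le_exp.mpr
    rw [← hcast]
    exact hnle
  have hn2pos : (0:ℝ) < ((n:ℝ))^2 := by rw [hcast]; positivity
  have hFT : |F T ω| ≤ |F (e k) ω| + M * (Real.log T - Real.log (e k)) := by
    have h1 := hFdiff ω (e k) T hS1 hST
    calc |F T ω| = |F (e k) ω + (F T ω - F (e k) ω)| := by congr 1; ring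
      _ ≤ |F (e k) ω| + |F T ω - F (e k) ω| := abs_add_le _ _
      _ ≤ _ := by linarith
  have hinv1 : (Real.log T)⁻¹ ≤ (((n:ℝ))^2)⁻¹ := inv_anti₀ hn2pos hnle
  have hdiff0 : 0 ≤ Real.log T - Real.log (e k) := by rw [hlogS]; linarith
  have hd1 : Real.log T - Real.log (e k) ≤ 2*(k:ℝ)+3 := by
    rw [hlogS]
    nlinarith [hngt, hcast]
  rw [Real.dist_eq, sub_zero, abs_mul, abs_of_pos (inv_pos.mpr hlogT0)]
  have hLeq : |L k ω| = (((k:ℝ)+1)^2)⁻¹ * |F (e k) ω| := by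
    rw [hL]; simp only
    rw [abs_mul, abs_of_pos (by positivity : (0:ℝ) < (((k:ℝ)+1)^2)⁻¹)]
  have main : (Real.log T)⁻¹ * |F T ω| ≤ |L k ω| + M * (2*(k:ℝ)+3) / ((k:ℝ)+1)^2 := by
    calc (Real.log T)⁻¹ * |F T ω|
        ≤ (Real.log T)⁻¹ * (|F (e k) ω| + M * (Real.log T - Real.log (e k))) :=
          mul_le_mul_of_nonneg_left hFT (inv_pos.mpr hlogT0).le
      _ = (Real.log T)⁻¹ * |F (e k) ω|
          + (Real.log T)⁻¹ * (M * (Real.log T - Real.log (e k))) := by ring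
      _ ≤ (((n:ℝ))^2)⁻¹ * |F (e k) ω| + (((n:ℝ))^2)⁻¹ * (M * (2*(k:ℝ)+3)) := by
          apply add_le_add
          · exact mul_le_mul hinv1 le_rfl (abs_nonneg _) (by positivity)
          · apply mul_le_mul hinv1 (mul_le_mul_of_nonneg_left hd1 hM.le)
              (by positivity) (by positivity)
      _ = |L k ω| + M * (2*(k:ℝ)+3) / ((k:ℝ)+1)^2 := by
          rw [hLeq, hcast]; ring
  have hfin := hk₀ k hkk0
  calc (Real.log T)⁻¹ * |F T ω| ≤ |L k ω| + M * (2*(k:ℝ)+3) / ((k:ℝ)+1)^2 := main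
    _ < ε/2 + ε/2 := add_lt_add hfin.1 hfin.2
    _ = ε := by ring

end Aux

/-- **Lemma (auxiliary ASCLT lemma).** If `{H_θ}_{θ>0}` is a jointly measurable,
uniformly a.s. bounded family of random variables whose correlations satisfy
`|E[H_θ H_w]| ≤ C ((θ/w)^{β₁} + (θ/w)^{β₂})` for `0 < θ < w`, then
`L_T = (1/log T) ∫₁^T θ⁻¹ H_θ dθ → 0` almost surely as `T → ∞`. -/
theorem stmt_0 {Ω : Type*} [MeasurableSpace Ω] (P : Measure Ω) [IsProbabilityMeasure P]
    (H : ℝ → Ω → ℝ)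
    (hmeas : Measurable (Function.uncurry H))
    (M : ℝ) (hM : 0 < M)
    (hbd : ∀ θ : ℝ, 0 < θ → ∀ᵐ ω ∂P, |H θ ω| ≤ M)
    (C β₁ β₂ : ℝ) (hC : 0 < C) (hβ₁ : 0 < β₁) (hβ₂ : 0 < β₂)
    (hcov : ∀ θ w : ℝ, 0 < θ → θ < w →
      |∫ ω, H θ ω * H w ω ∂P| ≤ C * ((θ / w) ^ β₁ + (θ / w) ^ β₂)) :
    ∀ᵐ ω ∂P, Tendsto (fun T : ℝ => (Real.log T)⁻¹ * ∫ θ in Set.Ioc (1 : ℝ) T, θ⁻¹ * H θ ω)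
      atTop (nhds 0) := by
  -- truncation
  set Hb : ℝ → Ω → ℝ := fun θ ω => max (-M) (min M (H θ ω)) with hHb
  have hbm : Measurable (Function.uncurry Hb) :=
    measurable_const.max (measurable_const.min hmeas)
  have hbdb : ∀ θ ω, |Hb θ ω| ≤ M := by
    intro θ ω
    rw [abs_le]
    constructor
    · exact le_max_left _ _
    · exact max_le (by linarith) (min_le_left _ _)
  have haeq : ∀ θ : ℝ, 0 < θ → H θ =ᵐ[P] Hb θ := by
    intro θ hθ
    filter_upwards [hbd θ hθ] with ω hω
    rw [abs_le] at hω
    rw [hHb]; simp only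
    rw [min_eq_right hω.2, max_eq_right hω.1]
  have hcovb : ∀ θ w : ℝ, 0 < θ → θ < w →
      |∫ ω, Hb θ ω * Hb w ω ∂P| ≤ C * ((θ / w) ^ β₁ + (θ / w) ^ β₂) := by
    intro θ w hθ hθw
    have heq : ∫ ω, Hb θ ω * Hb w ω ∂P = ∫ ω, H θ ω * H w ω ∂P := by
      apply integral_congr_ae
      filter_upwards [haeq θ hθ, haeq w (lt_trans hθ hθw)] with ω h1 h2
      rw [h1, h2]
    rw [heq]
    exact hcov θ w hθ hθw
  have haux := aux P Hb hbm M hM hbdb C β₁ β₂ hC hβ₁ hβ₂ hcovb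
  -- transfer via Fubini
  set ν : Measure ℝ := volume.restrict (Set.Ioi (1:ℝ)) with hν
  set D : Set (ℝ × Ω) := {p | H p.1 p.2 ≠ Hb p.1 p.2} with hD
  have hDm : MeasurableSet D := by
    have h1 : MeasurableSet {p : ℝ × Ω | H p.1 p.2 = Hb p.1 p.2} :=
      measurableSet_eq_fun hmeas hbm
    exact h1.compl
  have hDnull : (ν.prod P) D = 0 := by
    rw [Measure.measure_prod_null hDm]
    have h1 : ∀ᵐ θ ∂ν, θ ∈ Set.Ioi (1:ℝ) := ae_restrict_mem measurableSet_Ioi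
    filter_upwards [h1] with θ hθ
    have h2 := haeq θ (lt_trans one_pos hθ)
    have h3 : P {ω | H θ ω ≠ Hb θ ω} = 0 := h2
    simpa [hD, Set.preimage] using h3
  have hD' : MeasurableSet (Prod.swap ⁻¹' D : Set (Ω × ℝ)) := hDm.preimage measurable_swap
  have hswapnull : (P.prod ν) (Prod.swap ⁻¹' D) = 0 := by
    have h1 : (ν.prod P) D = (Measure.map Prod.swap (P.prod ν)) D := by
      rw [Measure.prod_swap]
    rw [h1, Measure.map_apply measurable_swap hDm] at hDnull
    exact hDnull
  have hsec : ∀ᵐ ω ∂P, ν (Prod.mk ω ⁻¹' (Prod.swap ⁻¹' D)) = 0 :=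
    (Measure.measure_prod_null hD').mp hswapnull
  filter_upwards [haux, hsec] with ω h1 h2
  apply h1.congr
  intro T
  congr 1
  apply integral_congr_ae
  have hsub : {θ : ℝ | ¬ θ⁻¹ * Hb θ ω = θ⁻¹ * H θ ω} ∩ Set.Ioc 1 T
      ⊆ (Prod.mk ω ⁻¹' (Prod.swap ⁻¹' D)) ∩ Set.Ioi 1 := by
    intro θ hθ
    constructor
    · simp only [Set.mem_preimage, Prod.swap, hD, Set.mem_setOf_eq]
      intro hcontra
      exact hθ.1 (by rw [hcontra])
    · exact hθ.2.1
  rw [Filter.EventuallyEq, ae_iff]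
  rw [Measure.restrict_apply' measurableSet_Ioc]
  apply measure_mono_null hsub
  rw [hν, Measure.restrict_apply' measurableSet_Ioi] at h2
  exact h2
end

section
/- Let (Ω, F, P) be a probability space and let {H_θ}_{θ>0} be a family of random variables such that (θ, ω) ↦ H_θ(ω) is jointly measurable, |H_θ| ≤ M almost surely for some constant M > 0 independent of θ, and such that there exist constants C, β₁, β₂ > 0 with |E[H_θ H_w]| ≤ C[(θ/w)^{β₁} + (θ/w)^{β₂}] for all 0 < θ < w. Then for every T > 1, setting L_T := (1/log T) ∫₁^T (1/θ) H_θ dθ, one has E[L_T²] ≤ (2C/log T)(1/β₁ + 1/β₂). -/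
open MeasureTheory Filter Set

/-- **Second-moment bound for `L_T`.** Under the correlation bound
`|E[H_θ H_w]| ≤ C ((θ/w)^{β₁} + (θ/w)^{β₂})` for `0 < θ < w`, the random variable
`L_T = (1/log T) ∫₁^T θ⁻¹ H_θ dθ` satisfies `E[L_T²] ≤ (2C/log T)(1/β₁ + 1/β₂)`. -/
theorem stmt_1 {Ω : Type*} [MeasurableSpace Ω] (P : Measure Ω) [IsProbabilityMeasure P]
    (H : ℝ → Ω → ℝ)
    (hmeas : Measurable (Function.uncurry H))
    (M : ℝ) (hM : 0 < M)
    (hbd : ∀ θ : ℝ, 0 < θ → ∀ᵐ ω ∂P, |H θ ω| ≤ M)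
    (C β₁ β₂ : ℝ) (hC : 0 < C) (hβ₁ : 0 < β₁) (hβ₂ : 0 < β₂)
    (hcov : ∀ θ w : ℝ, 0 < θ → θ < w →
      |∫ ω, H θ ω * H w ω ∂P| ≤ C * ((θ / w) ^ β₁ + (θ / w) ^ β₂)) :
    ∀ T : ℝ, 1 < T →
      ∫ ω, ((Real.log T)⁻¹ * ∫ θ in Set.Ioc (1 : ℝ) T, θ⁻¹ * H θ ω) ^ 2 ∂P
        ≤ 2 * C / Real.log T * (1 / β₁ + 1 / β₂) := by
  intro T hT
  have hlog : 0 < Real.log T := Real.log_pos hT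
  set s : Set ℝ := Set.Ioc (1 : ℝ) T with hs
  set μ : Measure ℝ := volume.restrict s with hμ
  haveI hfin : IsFiniteMeasure μ := by
    constructor
    rw [hμ, Measure.restrict_apply_univ, hs, Real.volume_Ioc]
    exact ENNReal.ofReal_lt_top
  set ρ : Measure (ℝ × ℝ) := μ.prod μ with hρ
  -- the integrand on the big product space
  set G : Ω × (ℝ × ℝ) → ℝ :=
    fun z => (z.2.1⁻¹ * H z.2.1 z.1) * (z.2.2⁻¹ * H z.2.2 z.1) with hG
  have hGmeas : Measurable G := by
    apply Measurable.mul
    · exact (measurable_snd.fst.inv).mul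
        (hmeas.comp (measurable_snd.fst.prodMk measurable_fst))
    · exact (measurable_snd.snd.inv).mul
        (hmeas.comp (measurable_snd.snd.prodMk measurable_fst))
  -- a.e. membership of the parameters in s
  have hss : MeasurableSet s := measurableSet_Ioc
  have hmemρ : ∀ᵐ q ∂ρ, q.1 ∈ s ∧ q.2 ∈ s := by
    rw [hρ, hμ, Measure.prod_restrict]
    filter_upwards [ae_restrict_mem (hss.prod hss)] with q hq
    exact ⟨hq.1, hq.2⟩
  have hmem : ∀ᵐ z ∂(P.prod ρ), z.2.1 ∈ s ∧ z.2.2 ∈ s := by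
    refine (Measure.ae_prod_iff_ae_ae ?_).2 (ae_of_all _ fun ω => hmemρ)
    exact (measurable_snd.fst hss).inter (measurable_snd.snd hss)
  -- a.e. bound on H over the big product
  have hHbd : ∀ᵐ z ∂(P.prod ρ), |H z.2.1 z.1| ≤ M ∧ |H z.2.2 z.1| ≤ M := by
    have hm1 : Measurable fun x : (ℝ × ℝ) × Ω => H x.1.1 x.2 :=
      hmeas.comp (measurable_fst.fst.prodMk measurable_snd)
    have hm2 : Measurable fun x : (ℝ × ℝ) × Ω => H x.1.2 x.2 :=
      hmeas.comp (measurable_fst.snd.prodMk measurable_snd)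
    have hsetm : MeasurableSet
        {x : (ℝ × ℝ) × Ω | |H x.1.1 x.2| ≤ M ∧ |H x.1.2 x.2| ≤ M} :=
      (measurableSet_le hm1.abs measurable_const).inter
        (measurableSet_le hm2.abs measurable_const)
    have h1 : ∀ᵐ q ∂ρ, ∀ᵐ ω ∂P, |H q.1 ω| ≤ M ∧ |H q.2 ω| ≤ M := by
      filter_upwards [hmemρ] with q hq
      filter_upwards [hbd q.1 (lt_trans one_pos hq.1.1),
        hbd q.2 (lt_trans one_pos hq.2.1)] with ω ha hb
      exact ⟨ha, hb⟩
    have h2 := (Measure.ae_ae_comm (μ := ρ) (ν := P) hsetm).1 h1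
    refine (Measure.ae_prod_iff_ae_ae ?_).2 h2
    have hn1 : Measurable fun z : Ω × ℝ × ℝ => H z.2.1 z.1 :=
      hmeas.comp (measurable_snd.fst.prodMk measurable_fst)
    have hn2 : Measurable fun z : Ω × ℝ × ℝ => H z.2.2 z.1 :=
      hmeas.comp (measurable_snd.snd.prodMk measurable_fst)
    exact (measurableSet_le hn1.abs measurable_const).inter
      (measurableSet_le hn2.abs measurable_const)
  have hGint : Integrable G (P.prod ρ) := by
    refine (integrable_const (M * M)).mono' hGmeas.aestronglyMeasurable ?_
    filter_upwards [hmem, hHbd] with z hz hb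
    have h1 : (1:ℝ) < z.2.1 := hz.1.1
    have h2 : (1:ℝ) < z.2.2 := hz.2.1
    have e1 : |z.2.1|⁻¹ ≤ 1 := by
      rw [abs_of_pos (lt_trans one_pos h1), inv_le_one_iff₀]; right; exact h1.le
    have e2 : |z.2.2|⁻¹ ≤ 1 := by
      rw [abs_of_pos (lt_trans one_pos h2), inv_le_one_iff₀]; right; exact h2.le
    have : ‖G z‖ = (|z.2.1|⁻¹ * |H z.2.1 z.1|) * (|z.2.2|⁻¹ * |H z.2.2 z.1|) := by
      simp [hG, abs_mul, abs_inv]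
    rw [this]
    calc (|z.2.1|⁻¹ * |H z.2.1 z.1|) * (|z.2.2|⁻¹ * |H z.2.2 z.1|)
        ≤ (1 * M) * (1 * M) := by
          have i1 : (0:ℝ) ≤ |z.2.1|⁻¹ := by positivity
          have i2 : (0:ℝ) ≤ |z.2.2|⁻¹ := by positivity
          apply mul_le_mul (mul_le_mul e1 hb.1 (abs_nonneg _) one_pos.le)
            (mul_le_mul e2 hb.2 (abs_nonneg _) one_pos.le)
            (by positivity) (by positivity)
      _ = M * M := by ring
  -- the covariance integrand on the parameter space
  set h : ℝ × ℝ → ℝ := fun q => q.1⁻¹ * q.2⁻¹ * ∫ ω, H q.1 ω * H q.2 ω ∂P with hh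
  have hrw : ∀ q : ℝ × ℝ, (∫ ω, G (ω, q) ∂P) = h q := by
    intro q
    have : ∀ ω, G (ω, q) = (q.1⁻¹ * q.2⁻¹) * (H q.1 ω * H q.2 ω) := by
      intro ω; simp only [hG]; ring
    simp_rw [this]
    rw [integral_const_mul]
  -- main identity
  have hkey : (∫ ω, (∫ θ in s, θ⁻¹ * H θ ω) ^ 2 ∂P) = ∫ q, h q ∂ρ := by
    have e1 : ∀ ω, (∫ θ in s, θ⁻¹ * H θ ω) ^ 2 = ∫ q, G (ω, q) ∂ρ := by
      intro ω
      rw [sq]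
      exact (integral_prod_mul (μ := μ) (ν := μ)
        (fun θ => θ⁻¹ * H θ ω) (fun θ => θ⁻¹ * H θ ω)).symm
    simp_rw [e1]
    rw [integral_integral_swap (f := fun ω q => G (ω, q)) hGint]
    exact integral_congr_ae (Eventually.of_forall hrw)
  -- integrability of h
  have hhint : Integrable h ρ := by
    have := hGint.integral_prod_right
    refine this.congr (Eventually.of_forall ?_)
    intro q; exact hrw q
  -- the dominating kernel
  set K : ℝ → ℝ × ℝ → ℝ :=
    fun β q => if q.1 < q.2 then C * q.1 ^ (β - 1) * q.2 ^ (-β - 1) else 0 with hK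
  have hKmeas : ∀ β : ℝ, Measurable (K β) := by
    intro β
    apply Measurable.ite (measurableSet_lt measurable_fst measurable_snd)
    · fun_prop
    · exact measurable_const
  have hKnonneg : ∀ β : ℝ, 0 < β → ∀ q : ℝ × ℝ, q.1 ∈ s → q.2 ∈ s → 0 ≤ K β q := by
    intro β hβ q h1 h2
    simp only [hK]
    split
    · have : (0:ℝ) < q.1 := lt_trans one_pos h1.1
      have : (0:ℝ) < q.2 := lt_trans one_pos h2.1
      positivity
    · exact le_refl _
  -- ρ-a.e. off the diagonal
  have hdiag : ∀ᵐ q ∂ρ, q.1 ≠ q.2 := by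
    have hD : MeasurableSet {q : ℝ × ℝ | q.1 = q.2} :=
      measurableSet_eq_fun measurable_fst measurable_snd
    rw [ae_iff]
    have hset : {q : ℝ × ℝ | ¬q.1 ≠ q.2} = {q : ℝ × ℝ | q.1 = q.2} := by
      ext q; simp
    rw [hset, hρ, Measure.measure_prod_null hD]
    refine ae_of_all _ fun θ => ?_
    have hpre : Prod.mk θ ⁻¹' {q : ℝ × ℝ | q.1 = q.2} = {θ} := by
      ext w; simp [eq_comm]
    show μ (Prod.mk θ ⁻¹' {q : ℝ × ℝ | q.1 = q.2}) = 0
    rw [hpre, hμ, Measure.restrict_apply (measurableSet_singleton θ)]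
    exact measure_mono_null Set.inter_subset_left Real.volume_singleton
  -- integrability and bound for K
  have hT0 : (0:ℝ) < T := lt_trans one_pos hT
  have hKint : ∀ β : ℝ, 0 < β → Integrable (K β) ρ := by
    intro β hβ
    refine (integrable_const (C * T ^ β)).mono' (hKmeas β).aestronglyMeasurable ?_
    filter_upwards [hmemρ] with q hq
    have h1 : (0:ℝ) < q.1 := lt_trans one_pos hq.1.1
    have h2 : (0:ℝ) < q.2 := lt_trans one_pos hq.2.1
    simp only [hK]
    split
    · rw [Real.norm_eq_abs, abs_of_nonneg (by positivity)]
      have e1 : q.1 ^ (β - 1) ≤ T ^ β := by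
        calc q.1 ^ (β - 1) ≤ q.1 ^ β :=
              Real.rpow_le_rpow_of_exponent_le hq.1.1.le (by linarith)
          _ ≤ T ^ β := Real.rpow_le_rpow h1.le hq.1.2 hβ.le
      have e2 : q.2 ^ (-β - 1) ≤ 1 :=
        Real.rpow_le_one_of_one_le_of_nonpos hq.2.1.le (by linarith)
      calc C * q.1 ^ (β - 1) * q.2 ^ (-β - 1)
          ≤ C * T ^ β * 1 := by
            apply mul_le_mul (mul_le_mul_of_nonneg_left e1 hC.le) e2
              (by positivity) (by positivity)
        _ = C * T ^ β := mul_one _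
    · simp only [norm_zero]
      positivity
  have hKval : ∀ β : ℝ, 0 < β → (∫ q, K β q ∂ρ) ≤ C / β * Real.log T := by
    intro β hβ
    have hinner : ∀ θ ∈ s, (∫ w, K β (θ, w) ∂μ) ≤ C / β * θ⁻¹ := by
      intro θ hθ
      have hθ0 : (0:ℝ) < θ := lt_trans one_pos hθ.1
      have hIoc : ∀ w, K β (θ, w)
          = Set.indicator (Set.Ioi θ) (fun w => C * θ ^ (β - 1) * w ^ (-β - 1)) w := by
        intro w
        simp only [hK, Set.indicator, Set.mem_Ioi]
      simp_rw [hIoc]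
      rw [hμ, integral_indicator measurableSet_Ioi,
        Measure.restrict_restrict measurableSet_Ioi]
      have hint : Set.Ioi θ ∩ s = Set.Ioc θ T := by
        rw [hs]; ext w
        simp only [Set.mem_inter_iff, Set.mem_Ioi, Set.mem_Ioc]
        constructor
        · rintro ⟨h1, _, h2⟩; exact ⟨h1, h2⟩
        · rintro ⟨h1, h2⟩; exact ⟨h1, lt_trans hθ.1 h1, h2⟩
      rw [hint, integral_const_mul, ← intervalIntegral.integral_of_le hθ.2,
        integral_rpow (Or.inr ⟨by linarith, Set.notMem_uIcc_of_lt hθ0 hT0⟩)]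
      have hexp : -β - 1 + 1 = -β := by ring
      rw [hexp]
      have hpow : θ ^ (β - 1) * θ ^ (-β) = θ⁻¹ := by
        rw [← Real.rpow_add hθ0]
        have : β - 1 + -β = -1 := by ring
        rw [this, Real.rpow_neg_one]
      have hV : (T ^ (-β) - θ ^ (-β)) / (-β) ≤ θ ^ (-β) / β := by
        have hTb : (0:ℝ) ≤ T ^ (-β) := Real.rpow_nonneg hT0.le _
        have e : (T ^ (-β) - θ ^ (-β)) / (-β) = (θ ^ (-β) - T ^ (-β)) / β := by
          rw [div_neg, ← neg_div, neg_sub]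
        rw [e]
        gcongr
        linarith
      calc C * θ ^ (β - 1) * ((T ^ (-β) - θ ^ (-β)) / (-β))
          ≤ C * θ ^ (β - 1) * (θ ^ (-β) / β) :=
            mul_le_mul_of_nonneg_left hV (by positivity)
        _ = C / β * (θ ^ (β - 1) * θ ^ (-β)) := by ring
        _ = C / β * θ⁻¹ := by rw [hpow]
    have hinv_int : Integrable (fun θ : ℝ => C / β * θ⁻¹) μ := by
      refine Integrable.const_mul ?_ _
      refine (integrable_const 1).mono' measurable_inv.aestronglyMeasurable ?_
      filter_upwards [(ae_restrict_mem hss : ∀ᵐ θ ∂μ, θ ∈ s)] with θ hθ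
      rw [Real.norm_eq_abs, abs_inv, abs_of_pos (lt_trans one_pos hθ.1)]
      rw [inv_le_one_iff₀]; right; exact hθ.1.le
    rw [hρ, integral_prod _ (hKint β hβ)]
    calc (∫ θ, ∫ w, K β (θ, w) ∂μ ∂μ)
        ≤ ∫ θ, C / β * θ⁻¹ ∂μ := by
          apply integral_mono_ae ((hKint β hβ).integral_prod_left) hinv_int
          filter_upwards [(ae_restrict_mem hss : ∀ᵐ θ ∂μ, θ ∈ s)] with θ hθ
          exact hinner θ hθ
      _ = C / β * ∫ θ, θ⁻¹ ∂μ := integral_const_mul _ _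
      _ = C / β * Real.log T := by
          rw [hμ, hs, ← intervalIntegral.integral_of_le hT.le,
            integral_inv_of_pos one_pos hT0, div_one]
  -- pointwise bound
  have key : ∀ a b : ℝ, 0 < a → a < b → ∀ β : ℝ,
      a⁻¹ * b⁻¹ * (C * (a / b) ^ β) = C * a ^ (β - 1) * b ^ (-β - 1) := by
    intro a b ha hab β
    have hb0 : (0:ℝ) < b := lt_trans ha hab
    have hbβ : (0:ℝ) < b ^ β := Real.rpow_pos_of_pos hb0 β
    rw [Real.div_rpow ha.le hb0.le, Real.rpow_sub ha, Real.rpow_one,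
      Real.rpow_sub hb0, Real.rpow_one, Real.rpow_neg hb0.le]
    field_simp
  have hptwise : ∀ᵐ q ∂ρ,
      h q ≤ K β₁ q + K β₂ q + K β₁ q.swap + K β₂ q.swap := by
    filter_upwards [hmemρ, hdiag] with q hq hne
    have h1 : (0:ℝ) < q.1 := lt_trans one_pos hq.1.1
    have h2 : (0:ℝ) < q.2 := lt_trans one_pos hq.2.1
    rcases lt_or_gt_of_ne hne with hlt | hgt
    · have hKs1 : K β₁ q.swap = 0 := by
        simp only [hK, Prod.fst_swap, Prod.snd_swap, if_neg (not_lt.mpr hlt.le)]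
      have hKs2 : K β₂ q.swap = 0 := by
        simp only [hK, Prod.fst_swap, Prod.snd_swap, if_neg (not_lt.mpr hlt.le)]
      rw [hKs1, hKs2, add_zero, add_zero]
      have hF := hcov q.1 q.2 h1 hlt
      calc h q ≤ q.1⁻¹ * q.2⁻¹ * |∫ ω, H q.1 ω * H q.2 ω ∂P| := by
            simp only [hh]
            exact mul_le_mul_of_nonneg_left (le_abs_self _) (by positivity)
        _ ≤ q.1⁻¹ * q.2⁻¹ * (C * ((q.1 / q.2) ^ β₁ + (q.1 / q.2) ^ β₂)) :=
            mul_le_mul_of_nonneg_left hF (by positivity)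
        _ = K β₁ q + K β₂ q := by
            simp only [hK, if_pos hlt]
            rw [← key q.1 q.2 h1 hlt β₁, ← key q.1 q.2 h1 hlt β₂]
            ring
    · have hKs1 : K β₁ q = 0 := by
        simp only [hK, if_neg (not_lt.mpr hgt.le)]
      have hKs2 : K β₂ q = 0 := by
        simp only [hK, if_neg (not_lt.mpr hgt.le)]
      rw [hKs1, hKs2, zero_add, zero_add]
      have hF := hcov q.2 q.1 h2 hgt
      have hcomm : (∫ ω, H q.1 ω * H q.2 ω ∂P) = ∫ ω, H q.2 ω * H q.1 ω ∂P := by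
        simp_rw [mul_comm]
      calc h q ≤ q.2⁻¹ * q.1⁻¹ * |∫ ω, H q.2 ω * H q.1 ω ∂P| := by
            simp only [hh]
            rw [hcomm]
            refine le_trans (mul_le_mul_of_nonneg_left (le_abs_self _)
              (by positivity)) (le_of_eq (by ring))
        _ ≤ q.2⁻¹ * q.1⁻¹ * (C * ((q.2 / q.1) ^ β₁ + (q.2 / q.1) ^ β₂)) :=
            mul_le_mul_of_nonneg_left hF (by positivity)
        _ = K β₁ q.swap + K β₂ q.swap := by
            simp only [hK, Prod.fst_swap, Prod.snd_swap, if_pos hgt]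
            rw [← key q.2 q.1 h2 hgt β₁, ← key q.2 q.1 h2 hgt β₂]
            ring
  -- put everything together
  have hbound : (∫ q, h q ∂ρ) ≤ 2 * (C / β₁ + C / β₂) * Real.log T := by
    have hKswap : ∀ β : ℝ, 0 < β → Integrable (fun q : ℝ × ℝ => K β q.swap) ρ ∧
        (∫ q, K β q.swap ∂ρ) = ∫ q, K β q ∂ρ := by
      intro β hβ
      constructor
      · exact ((hKint β hβ).swap)
      · exact integral_prod_swap (K β)
    have i1 := hKint β₁ hβ₁
    have i2 := hKint β₂ hβ₂
    have i3 := (hKswap β₁ hβ₁).1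
    have i4 := (hKswap β₂ hβ₂).1
    have i12 : Integrable (fun q : ℝ × ℝ => K β₁ q + K β₂ q) ρ := i1.add i2
    have i123 : Integrable (fun q : ℝ × ℝ => K β₁ q + K β₂ q + K β₁ q.swap) ρ :=
      i12.add i3
    have i1234 : Integrable
        (fun q : ℝ × ℝ => K β₁ q + K β₂ q + K β₁ q.swap + K β₂ q.swap) ρ :=
      i123.add i4
    calc (∫ q, h q ∂ρ)
        ≤ ∫ q, (K β₁ q + K β₂ q + K β₁ q.swap + K β₂ q.swap) ∂ρ :=
          integral_mono_ae hhint i1234 hptwise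
      _ = (∫ q, K β₁ q ∂ρ) + (∫ q, K β₂ q ∂ρ) + (∫ q, K β₁ q.swap ∂ρ)
            + (∫ q, K β₂ q.swap ∂ρ) := by
          rw [integral_add i123 i4, integral_add i12 i3, integral_add i1 i2]
      _ = 2 * ((∫ q, K β₁ q ∂ρ) + (∫ q, K β₂ q ∂ρ)) := by
          rw [(hKswap β₁ hβ₁).2, (hKswap β₂ hβ₂).2]; ring
      _ ≤ 2 * (C / β₁ * Real.log T + C / β₂ * Real.log T) := by
          have := hKval β₁ hβ₁
          have := hKval β₂ hβ₂
          linarith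
      _ = 2 * (C / β₁ + C / β₂) * Real.log T := by ring
  -- final computation
  have lhs_eq : (∫ ω, ((Real.log T)⁻¹ * ∫ θ in Set.Ioc (1:ℝ) T, θ⁻¹ * H θ ω) ^ 2 ∂P)
      = (Real.log T)⁻¹ ^ 2 * ∫ ω, (∫ θ in s, θ⁻¹ * H θ ω) ^ 2 ∂P := by
    simp_rw [mul_pow]
    rw [integral_const_mul]
  rw [lhs_eq, hkey]
  calc (Real.log T)⁻¹ ^ 2 * ∫ q, h q ∂ρ
      ≤ (Real.log T)⁻¹ ^ 2 * (2 * (C / β₁ + C / β₂) * Real.log T) := by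
        apply mul_le_mul_of_nonneg_left hbound (by positivity)
    _ = 2 * C / Real.log T * (1 / β₁ + 1 / β₂) := by
        field_simp
end

section
/- Let α ∈ (0,1). Then for every x ∈ ℝ with x ≠ 0, ∫_ℝ R_{1,α/2}(y) R_{1,α/2}(x − y) dy = R_{1,α}(x); equivalently, C_{1,α/2}² ∫_ℝ |y|^{α/2 − 1} |x − y|^{α/2 − 1} dy = C_{1,α} |x|^{α − 1}. -/
open MeasureTheory Real

/-- The constant `C_{1,α} = π^{-1/2} 2^{-α} Γ((1-α)/2)/Γ(α/2)` of the Riesz kernel. -/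
noncomputable def rieszConst (α : ℝ) : ℝ :=
  π ^ (-(1 / 2) : ℝ) * (2 : ℝ) ^ (-α) * (Gamma ((1 - α) / 2) / Gamma (α / 2))

/-- The Riesz kernel of order `α`: `R_{1,α}(x) = C_{1,α}|x|^{-(1-α)}`. -/
noncomputable def rieszKernel (α : ℝ) (x : ℝ) : ℝ := rieszConst α * |x| ^ (α - 1)

open Set

section riesz_aux

lemma betaIntegrand_intervalIntegrable {s t : ℝ} (hs : 0 < s) (ht : 0 < t) :
    IntervalIntegrable (fun x : ℝ => x ^ (s - 1) * (1 - x) ^ (t - 1)) volume 0 1 := by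
  have h1 : IntervalIntegrable (fun x : ℝ => x ^ (s - 1) * (1 - x) ^ (t - 1)) volume 0 (1/2) := by
    apply IntervalIntegrable.mul_continuousOn
    · exact intervalIntegral.intervalIntegrable_rpow' (by linarith)
    · apply ContinuousOn.rpow_const
      · exact (continuous_const.sub continuous_id).continuousOn
      · intro x hx
        rw [uIcc_of_le (by norm_num : (0:ℝ) ≤ 1/2)] at hx
        exact Or.inl (ne_of_gt (by linarith [hx.2]))
  have h2 : IntervalIntegrable (fun x : ℝ => x ^ (s - 1) * (1 - x) ^ (t - 1)) volume (1/2) 1 := by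
    have h3 : IntervalIntegrable (fun x : ℝ => (1 - x) ^ (t - 1) * x ^ (s - 1)) volume (1/2) 1 := by
      apply IntervalIntegrable.mul_continuousOn
      · have h4 : IntervalIntegrable (fun x : ℝ => x ^ (t - 1)) volume 0 (1/2) :=
          intervalIntegral.intervalIntegrable_rpow' (by linarith)
        have := h4.comp_sub_left 1
        norm_num at this
        exact this.symm
      · apply ContinuousOn.rpow_const continuous_id.continuousOn
        intro x hx
        rw [uIcc_of_le (by norm_num : (1:ℝ)/2 ≤ 1)] at hx
        exact Or.inl (ne_of_gt (by simp only [id_eq]; linarith [hx.1]))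
    exact h3.congr (fun x _ => mul_comm _ _)
  exact h1.trans h2

lemma betaIntegrand_integrableOn {s t : ℝ} (hs : 0 < s) (ht : 0 < t) :
    IntegrableOn (fun x : ℝ => x ^ (s - 1) * (1 - x) ^ (t - 1)) (Ioo 0 1) := by
  have := (intervalIntegrable_iff_integrableOn_Ioc_of_le zero_le_one).mp
    (betaIntegrand_intervalIntegrable hs ht)
  exact this.mono_set Ioo_subset_Ioc_self

lemma realBeta {s t : ℝ} (hs : 0 < s) (ht : 0 < t) :
    ∫ x in Ioo (0:ℝ) 1, x ^ (s - 1) * (1 - x) ^ (t - 1) = Gamma s * Gamma t / Gamma (s + t) := by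
  have hC := Complex.Gamma_mul_Gamma_eq_betaIntegral
    (s := (s:ℂ)) (t := (t:ℂ)) (by simpa using hs) (by simpa using ht)
  have hbeta : Complex.betaIntegral (s:ℂ) (t:ℂ)
      = ((∫ x in Ioo (0:ℝ) 1, x ^ (s - 1) * (1 - x) ^ (t - 1) : ℝ) : ℂ) := by
    rw [Complex.betaIntegral, intervalIntegral.integral_of_le zero_le_one]
    calc (∫ x in Ioc (0:ℝ) 1, (x:ℂ) ^ ((s:ℂ) - 1) * (1 - (x:ℂ)) ^ ((t:ℂ) - 1))
        = ∫ x in Ioc (0:ℝ) 1, ((x ^ (s - 1) * (1 - x) ^ (t - 1) : ℝ) : ℂ) := by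
          refine setIntegral_congr_fun measurableSet_Ioc fun x hx => ?_
          rw [show ((s:ℂ) - 1) = ((s - 1 : ℝ) : ℂ) by push_cast; ring,
            show ((t:ℂ) - 1) = ((t - 1 : ℝ) : ℂ) by push_cast; ring,
            show (1 - (x:ℂ)) = ((1 - x : ℝ) : ℂ) by push_cast; ring,
            ← Complex.ofReal_cpow hx.1.le, ← Complex.ofReal_cpow (by linarith [hx.2]),
            Complex.ofReal_mul]
      _ = ((∫ x in Ioc (0:ℝ) 1, x ^ (s - 1) * (1 - x) ^ (t - 1) : ℝ) : ℂ) := integral_ofReal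
      _ = _ := by rw [integral_Ioc_eq_integral_Ioo]
  rw [hbeta, ← Complex.ofReal_add, Complex.Gamma_ofReal, Complex.Gamma_ofReal,
    Complex.Gamma_ofReal, ← Complex.ofReal_mul, ← Complex.ofReal_mul] at hC
  have := Complex.ofReal_injective hC
  have hG : Gamma (s + t) ≠ 0 := (Gamma_pos_of_pos (by linarith)).ne'
  field_simp
  linarith [this]

section pieces

variable {a : ℝ} (ha0 : 0 < a) (ha : a < 1/2)

noncomputable def gg (a : ℝ) : ℝ → ℝ := fun y => |y| ^ (a - 1) * |1 - y| ^ (a - 1)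

include ha0 ha

lemma gg_Ioo : IntegrableOn (gg a) (Ioo 0 1) ∧
    ∫ y in Ioo (0:ℝ) 1, gg a y = Gamma a * Gamma a / Gamma (2 * a) := by
  have hcong : ∀ y ∈ Ioo (0:ℝ) 1, gg a y = y ^ (a - 1) * (1 - y) ^ (a - 1) := by
    intro y hy
    rw [gg, abs_of_pos hy.1, abs_of_pos (by linarith [hy.2])]
  constructor
  · exact (betaIntegrand_integrableOn ha0 ha0).congr_fun
      (fun y hy => (hcong y hy).symm) measurableSet_Ioo
  · rw [setIntegral_congr_fun measurableSet_Ioo hcong, realBeta ha0 ha0, two_mul]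

omit ha0 ha in
lemma gg_image_inv : Inv.inv '' Ioo (0:ℝ) 1 = Ioi 1 := by
  ext y
  simp only [mem_image, mem_Ioo, mem_Ioi]
  constructor
  · rintro ⟨t, ⟨ht0, ht1⟩, rfl⟩
    exact (one_lt_inv₀ ht0).mpr ht1
  · intro hy
    exact ⟨y⁻¹, ⟨by positivity, inv_lt_one_of_one_lt₀ hy⟩, inv_inv y⟩

omit ha0 ha in
lemma gg_inv_pointwise : ∀ x ∈ Ioo (0:ℝ) 1,
    |(-(x^2)⁻¹)| • gg a x⁻¹ = x ^ ((1 - 2*a) - 1) * (1 - x) ^ (a - 1) := by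
  intro x hx
  obtain ⟨hx0, hx1⟩ := hx
  have h1 : |x⁻¹| = x⁻¹ := abs_of_pos (by positivity)
  have h2 : |1 - x⁻¹| = (1 - x) * x⁻¹ := by
    rw [abs_of_neg (by rw [sub_neg]; exact (one_lt_inv₀ hx0).mpr hx1), neg_sub]
    field_simp
  have hx2 : ((x ^ 2)⁻¹ : ℝ) = x ^ ((-2 : ℝ)) := by
    rw [← rpow_natCast x 2, ← rpow_neg hx0.le]
    norm_num
  have hxi : (x⁻¹) ^ (a - 1) = x ^ (1 - a) := by
    rw [← rpow_neg_one x, ← rpow_mul hx0.le]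
    norm_num
  rw [gg]
  simp only [smul_eq_mul, h1, h2, abs_neg, abs_inv, abs_of_pos (by positivity : (0:ℝ) < x ^ 2)]
  rw [mul_rpow (by linarith : (0:ℝ) ≤ 1 - x) (by positivity : (0:ℝ) ≤ x⁻¹), hxi, hx2]
  rw [show x ^ (1 - 2*a - 1) = x ^ ((-2:ℝ)) * x ^ (1 - a) * x ^ (1 - a) by
    rw [← rpow_add hx0, ← rpow_add hx0]; congr 1; ring]
  ring

lemma gg_hasDeriv_inv : ∀ x ∈ Ioo (0:ℝ) 1,
    HasDerivWithinAt (Inv.inv : ℝ → ℝ) (-(x^2)⁻¹) (Ioo 0 1) x := fun x hx =>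
  (hasDerivAt_inv hx.1.ne').hasDerivWithinAt

lemma gg_Ioi : IntegrableOn (gg a) (Ioi 1) ∧
    ∫ y in Ioi (1:ℝ), gg a y = Gamma a * Gamma (1 - 2*a) / Gamma (1 - a) := by
  have hinj : InjOn (Inv.inv : ℝ → ℝ) (Ioo 0 1) := inv_injective.injOn
  have hI := integral_image_eq_integral_abs_deriv_smul measurableSet_Ioo
    (gg_hasDeriv_inv ha0 ha) hinj (gg a)
  have hInt := integrableOn_image_iff_integrableOn_abs_deriv_smul measurableSet_Ioo
    (gg_hasDeriv_inv ha0 ha) hinj (gg a)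
  rw [gg_image_inv] at hI hInt
  have hcong := setIntegral_congr_fun (μ := volume) measurableSet_Ioo (gg_inv_pointwise (a := a))
  constructor
  · rw [hInt]
    exact (betaIntegrand_integrableOn (by linarith) ha0).congr_fun
      (fun y hy => (gg_inv_pointwise y hy).symm) measurableSet_Ioo
  · rw [hI, hcong, realBeta (by linarith) ha0]
    rw [show 1 - 2*a + a = 1 - a by ring, mul_comm (Gamma (1 - 2*a))]

lemma gg_Iio : IntegrableOn (gg a) (Iio 0) ∧
    ∫ y in Iio (0:ℝ), gg a y = Gamma a * Gamma (1 - 2*a) / Gamma (1 - a) := by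
  have himg : (fun y : ℝ => 1 - y) '' Ioi 1 = Iio 0 := by
    ext y
    simp only [mem_image, mem_Ioi, mem_Iio]
    constructor
    · rintro ⟨t, ht, rfl⟩; linarith
    · intro hy; exact ⟨1 - y, by linarith, by ring⟩
  have hderiv : ∀ x ∈ Ioi (1:ℝ),
      HasDerivWithinAt (fun y : ℝ => 1 - y) (-1) (Ioi 1) x := fun x _ =>
    ((hasDerivAt_id x).const_sub 1).hasDerivWithinAt
  have hinj : InjOn (fun y : ℝ => 1 - y) (Ioi 1) := fun u _ v _ h => by
    have := h; dsimp only at this; linarith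
  have hpt : ∀ x ∈ Ioi (1:ℝ), |(-1:ℝ)| • gg a (1 - x) = gg a x := by
    intro x _
    simp only [abs_neg, abs_one, one_smul, gg, sub_sub_cancel]
    ring
  have hI := integral_image_eq_integral_abs_deriv_smul measurableSet_Ioi hderiv hinj (gg a)
  have hInt := integrableOn_image_iff_integrableOn_abs_deriv_smul measurableSet_Ioi hderiv
    hinj (gg a)
  rw [himg] at hI hInt
  constructor
  · rw [hInt]
    exact (gg_Ioi ha0 ha).1.congr_fun (fun y hy => (hpt y hy).symm) measurableSet_Ioi
  · rw [hI, setIntegral_congr_fun measurableSet_Ioi hpt, (gg_Ioi ha0 ha).2]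

end pieces

section total

variable {a : ℝ} (ha0 : 0 < a) (ha : a < 1/2)

include ha0 ha

lemma gg_total : Integrable (gg a) ∧
    ∫ y, gg a y = Gamma a * Gamma a / Gamma (2 * a)
      + 2 * (Gamma a * Gamma (1 - 2*a) / Gamma (1 - a)) := by
  have hIic : IntegrableOn (gg a) (Iic 0) :=
    (gg_Iio ha0 ha).1.congr_set_ae Iio_ae_eq_Iic.symm
  have hIoc : IntegrableOn (gg a) (Ioc 0 1) :=
    (gg_Ioo ha0 ha).1.congr_set_ae Ioo_ae_eq_Ioc.symm
  have hU : Ioc (0:ℝ) 1 ∪ Ioi 1 = Ioi 0 := Ioc_union_Ioi_eq_Ioi zero_le_one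
  have hIoi0 : IntegrableOn (gg a) (Ioi 0) := by
    rw [← hU]; exact hIoc.union (gg_Ioi ha0 ha).1
  constructor
  · rw [← integrableOn_univ, ← Iic_union_Ioi (a := (0:ℝ))]
    exact hIic.union hIoi0
  · rw [← intervalIntegral.integral_Iic_add_Ioi hIic hIoi0, ← hU,
      setIntegral_union (Ioc_disjoint_Ioi le_rfl) measurableSet_Ioi hIoc (gg_Ioi ha0 ha).1,
      setIntegral_congr_set Iio_ae_eq_Iic.symm, integral_Ioc_eq_integral_Ioo,
      (gg_Iio ha0 ha).2, (gg_Ioo ha0 ha).2, (gg_Ioi ha0 ha).2]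
    ring

omit ha in
lemma gg_scaling {x : ℝ} (hx : x ≠ 0) :
    ∫ y : ℝ, |y| ^ (a - 1) * |x - y| ^ (a - 1) = |x| ^ (2*a - 1) * ∫ y, gg a y := by
  have hax : (0:ℝ) < |x| := abs_pos.mpr hx
  have hcm := Measure.integral_comp_mul_left
    (fun y : ℝ => |y| ^ (a - 1) * |x - y| ^ (a - 1)) x
  have hpt : ∀ u : ℝ, |x * u| ^ (a - 1) * |x - x * u| ^ (a - 1)
      = (|x| ^ (a - 1) * |x| ^ (a - 1)) * gg a u := by
    intro u
    rw [gg]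
    have h1 : |x - x * u| = |x| * |1 - u| := by rw [← abs_mul]; ring_nf
    rw [abs_mul, h1, mul_rpow (abs_nonneg x) (abs_nonneg u),
      mul_rpow (abs_nonneg x) (abs_nonneg (1 - u))]
    ring
  simp only [hpt] at hcm
  rw [integral_const_mul] at hcm
  have h2 : (∫ y : ℝ, |y| ^ (a - 1) * |x - y| ^ (a - 1))
      = |x| * ((|x| ^ (a - 1) * |x| ^ (a - 1)) * ∫ y, gg a y) := by
    rw [hcm, smul_eq_mul, abs_inv, ← mul_assoc, mul_inv_cancel₀ hax.ne', one_mul]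
  rw [h2, show |x| ^ (2*a - 1) = |x| * (|x| ^ (a-1) * |x| ^ (a-1)) by
    nth_rewrite 2 [← rpow_one |x|]
    rw [← rpow_add hax, ← rpow_add hax]; congr 1; ring]
  ring

end total

lemma riesz_const_identity {a : ℝ} (ha0 : 0 < a) (ha : a < 1/2) :
    rieszConst a ^ 2 * (Gamma a * Gamma a / Gamma (2*a)
      + 2 * (Gamma a * Gamma (1 - 2*a) / Gamma (1 - a))) = rieszConst (2*a) := by
  have pi0 := pi_pos
  set sp := Real.sqrt π with hsp
  have hsp2 : sp ^ 2 = π := sq_sqrt pi0.le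
  have hsp0 : 0 < sp := sqrt_pos.mpr pi0
  set t := (2:ℝ) ^ a with htdef
  have ht0 : (0:ℝ) < t := rpow_pos_of_pos two_pos a
  set c := Real.cos (π * a / 2) with hcdef
  have hc0 : 0 < c := cos_pos_of_mem_Ioo ⟨by nlinarith, by nlinarith⟩
  -- Gamma positivity
  have G1 : 0 < Gamma a := Gamma_pos_of_pos ha0
  have G2 : 0 < Gamma (a/2) := Gamma_pos_of_pos (by linarith)
  have G3 : 0 < Gamma ((1-a)/2) := Gamma_pos_of_pos (by linarith)
  have G4 : 0 < Gamma ((1+a)/2) := Gamma_pos_of_pos (by linarith)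
  have G5 : 0 < Gamma (a + 1/2) := Gamma_pos_of_pos (by linarith)
  have G6 : 0 < Gamma (1/2 - a) := Gamma_pos_of_pos (by linarith)
  have G7 : 0 < Gamma (1 - a) := Gamma_pos_of_pos (by linarith)
  have G8 : 0 < Gamma (1 - 2*a) := Gamma_pos_of_pos (by linarith)
  have G9 : 0 < Gamma (2*a) := Gamma_pos_of_pos (by linarith)
  -- power facts
  have h2a : (2:ℝ) ^ (2*a) = t ^ 2 := by rw [two_mul, rpow_add two_pos, sq]
  have hkey1 : (2:ℝ) ^ (1 - 2*a) * t ^ 2 = 2 := by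
    rw [← h2a, ← rpow_add two_pos]; norm_num
  have hkey2 : (2:ℝ) ^ (1 - a) * t = 2 := by
    rw [htdef, ← rpow_add two_pos]; norm_num
  have hpi : (π:ℝ) ^ (-(1/2) : ℝ) = sp⁻¹ := by
    rw [rpow_neg pi0.le, hsp, sqrt_eq_rpow]
  have hma : (2:ℝ) ^ (-a) = t⁻¹ := by rw [htdef, ← rpow_neg two_pos.le]
  have hm2a : (2:ℝ) ^ (-(2*a)) = (t^2)⁻¹ := by rw [← h2a, ← rpow_neg two_pos.le]
  -- reflection formulas
  have R1' : Gamma ((1+a)/2) * Gamma ((1-a)/2) * c = π := by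
    have h := Real.Gamma_mul_Gamma_one_sub ((1+a)/2)
    rw [show 1 - (1+a)/2 = (1-a)/2 by ring, show π * ((1+a)/2) = π * a / 2 + π/2 by ring,
      sin_add_pi_div_two] at h
    rw [h, ← hcdef]; field_simp [hc0.ne']
  set cc := Real.cos (π * a) with hccdef
  have hcc : cc = 2 * c^2 - 1 := by
    have h := Real.cos_two_mul (π * a / 2)
    rw [show 2 * (π * a / 2) = π * a by ring] at h
    rw [hccdef, hcdef, h]
  have R2 := Real.Gamma_mul_Gamma_one_sub (a + 1/2)
  rw [show 1 - (a + 1/2) = 1/2 - a by ring, show π * (a + 1/2) = π * a + π/2 by ring,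
    sin_add_pi_div_two, ← hccdef] at R2
  have hcc_ne : cc ≠ 0 := by
    intro h
    rw [h, div_zero] at R2
    exact (mul_pos G5 G6).ne' R2
  have R2' : Gamma (a + 1/2) * Gamma (1/2 - a) * cc = π := by
    rw [R2]; field_simp
  -- duplication formulas
  have D1' : Gamma a * Gamma (a + 1/2) * t^2 = Gamma (2*a) * 2 * sp := by
    rw [Real.Gamma_mul_Gamma_add_half a, ← hsp]
    linear_combination (Gamma (2*a) * sp) * hkey1
  have D2' : Gamma (a/2) * Gamma ((1+a)/2) * t = Gamma a * 2 * sp := by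
    have h := Real.Gamma_mul_Gamma_add_half (a/2)
    rw [show a/2 + 1/2 = (1+a)/2 by ring, show 2*(a/2) = a by ring, ← hsp] at h
    linear_combination t * h + (Gamma a * sp) * hkey2
  have D3' : Gamma (1/2 - a) * Gamma (1 - a) = Gamma (1 - 2*a) * t^2 * sp := by
    have h := Real.Gamma_mul_Gamma_add_half (1/2 - a)
    rw [show 1/2 - a + 1/2 = 1 - a by ring, show 2*(1/2 - a) = 1 - 2*a by ring,
      show (1:ℝ) - (1 - 2*a) = 2*a by ring, h2a, ← hsp] at h
    exact h
  -- solve for individual Gamma values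
  have e1 : Gamma ((1-a)/2) = π / (c * Gamma ((1+a)/2)) := by
    rw [eq_div_iff (by positivity)]; linear_combination R1'
  have e2 : Gamma ((1+a)/2) = Gamma a * 2 * sp / (t * Gamma (a/2)) := by
    rw [eq_div_iff (by positivity)]; linear_combination D2'
  have e3 : Gamma (2*a) = Gamma a * Gamma (a + 1/2) * t^2 / (2 * sp) := by
    rw [eq_div_iff (by positivity)]; linear_combination -D1'
  have e4 : Gamma (a + 1/2) = π / (cc * Gamma (1/2 - a)) := by
    rw [eq_div_iff (mul_ne_zero hcc_ne G6.ne')]; linear_combination R2'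
  have e5 : Gamma (1 - 2*a) = Gamma (1/2 - a) * Gamma (1 - a) / (t^2 * sp) := by
    rw [eq_div_iff (by positivity)]; linear_combination -D3'
  rw [rieszConst, rieszConst, show (1 - 2*a)/2 = 1/2 - a by ring, show (2*a)/2 = a by ring,
    hpi, hma, hm2a, e1, e2, e3, e4, e5, hcc, ← hsp2]
  have hc2 : 2 * c^2 - 1 ≠ 0 := by rw [← hcc]; exact hcc_ne
  field_simp
  ring

end riesz_aux

/-- Semigroup property of Riesz kernels: `R_{1,α/2} * R_{1,α/2} = R_{1,α}`, i.e.
`C_{1,α/2}² ∫ |y|^{α/2-1}|x-y|^{α/2-1} dy = C_{1,α}|x|^{α-1}` for `x ≠ 0`. -/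
theorem stmt_6 (α : ℝ) (hα1 : 0 < α) (hα2 : α < 1) (x : ℝ) (hx : x ≠ 0) :
    (∫ y : ℝ, rieszKernel (α / 2) y * rieszKernel (α / 2) (x - y)) = rieszKernel α x ∧
    rieszConst (α / 2) ^ 2 * ∫ y : ℝ, |y| ^ (α / 2 - 1) * |x - y| ^ (α / 2 - 1)
      = rieszConst α * |x| ^ (α - 1) := by
  have ha0 : 0 < α / 2 := by linarith
  have ha : α / 2 < 1 / 2 := by linarith
  have key : rieszConst (α / 2) ^ 2 * ∫ y : ℝ, |y| ^ (α / 2 - 1) * |x - y| ^ (α / 2 - 1)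
      = rieszConst α * |x| ^ (α - 1) := by
    rw [gg_scaling ha0 hx, (gg_total ha0 ha).2]
    have hid := riesz_const_identity ha0 ha
    rw [show 2 * (α / 2) = α by ring] at hid ⊢
    linear_combination |x| ^ (α - 1) * hid
  refine ⟨?_, key⟩
  have hpt : ∀ y : ℝ, rieszKernel (α/2) y * rieszKernel (α/2) (x - y)
      = rieszConst (α/2) ^ 2 * (|y| ^ (α/2 - 1) * |x - y| ^ (α/2 - 1)) := fun y => by
    rw [rieszKernel, rieszKernel]; ring
  calc (∫ y : ℝ, rieszKernel (α/2) y * rieszKernel (α/2) (x - y))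
      = ∫ y : ℝ, rieszConst (α/2) ^ 2 * (|y| ^ (α/2 - 1) * |x - y| ^ (α/2 - 1)) := by
        simp only [hpt]
    _ = rieszConst (α/2) ^ 2 * ∫ y : ℝ, |y| ^ (α/2 - 1) * |x - y| ^ (α/2 - 1) :=
        integral_const_mul _ _
    _ = rieszConst α * |x| ^ (α - 1) := key
    _ = rieszKernel α x := rfl
end

section
/- For every H ∈ (1/2, 1) and all θ > 0, w > 0, ∫_ℝ sin(θ|ξ|) sin(w|ξ|) |ξ|^{−1−2H} dξ = ((θ + w)^{2H} − |θ − w|^{2H})/(4 c_H), where c_H = Γ(2H+1) sin(πH)/(2π). -/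
open MeasureTheory Real Set Filter

lemma integrable_exp_cos {t : ℝ} (ht : 0 < t) (a : ℝ) :
    IntegrableOn (fun x => Real.exp (-(t*x)) * Real.cos (a*x)) (Ioi 0) := by
  refine ((exp_neg_integrableOn_Ioi 0 ht).mono' ?_ ?_)
  · exact (Continuous.mul (Real.continuous_exp.comp (continuous_const.mul continuous_id).neg)
      (Real.continuous_cos.comp (continuous_const.mul continuous_id))).aestronglyMeasurable
  · filter_upwards [] with x
    rw [Real.norm_eq_abs, abs_mul, abs_exp, neg_mul]
    exact mul_le_of_le_one_right (le_of_lt (exp_pos _)) (abs_cos_le_one _)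

lemma integral_exp_cos {t : ℝ} (ht : 0 < t) (a : ℝ) :
    ∫ x in Ioi (0:ℝ), Real.exp (-(t*x)) * Real.cos (a*x) = t / (t^2 + a^2) := by
  have hden : (0:ℝ) < t^2 + a^2 := by positivity
  set F : ℝ → ℝ := fun x => Real.exp (-(t*x)) * (a * Real.sin (a*x) - t * Real.cos (a*x)) / (t^2+a^2)
  have hderiv : ∀ x ∈ Ioi (0:ℝ), HasDerivAt F (Real.exp (-(t*x)) * Real.cos (a*x)) x := by
    intro x _
    have h1 : HasDerivAt (fun x => Real.exp (-(t*x))) (Real.exp (-(t*x)) * (-t)) x := by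
      have h0 : HasDerivAt (fun x : ℝ => -(t*x)) (-t) x := by
        simpa [Pi.neg_def] using ((hasDerivAt_id x).const_mul t).neg
      exact (Real.hasDerivAt_exp (-(t*x))).comp x h0
    have h2 : HasDerivAt (fun x => a * Real.sin (a*x) - t * Real.cos (a*x))
        (a * (Real.cos (a*x) * a) - t * (-Real.sin (a*x) * a)) x := by
      have hax : HasDerivAt (fun x : ℝ => a*x) a x := by simpa using (hasDerivAt_id x).const_mul a
      exact (((Real.hasDerivAt_sin (a*x)).comp x hax).const_mul a).sub
        (((Real.hasDerivAt_cos (a*x)).comp x hax).const_mul t)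
    have := (h1.mul h2).div_const (t^2+a^2)
    convert this using 1
    · rfl
    · rfl
    · rfl
    · rw [eq_div_iff hden.ne']; ring
  have htend : Tendsto F atTop (nhds 0) := by
    have h1 : Tendsto (fun x => Real.exp (-(t*x))) atTop (nhds 0) := by
      have hm : Tendsto (fun x : ℝ => t*x) atTop atTop := tendsto_id.const_mul_atTop ht
      exact tendsto_exp_neg_atTop_nhds_zero.comp hm
    have hb : ∀ x : ℝ, |(a * Real.sin (a*x) - t * Real.cos (a*x)) / (t^2+a^2)| ≤ (|a| + |t|)/(t^2+a^2) := by
      intro x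
      rw [abs_div, abs_of_pos hden]
      gcongr
      calc |a * Real.sin (a*x) - t * Real.cos (a*x)| ≤ |a * Real.sin (a*x)| + |t * Real.cos (a*x)| := abs_sub _ _
        _ ≤ |a| + |t| := by
            rw [abs_mul, abs_mul]
            gcongr
            · exact mul_le_of_le_one_right (abs_nonneg a) (abs_sin_le_one _) |>.trans le_rfl
            · exact mul_le_of_le_one_right (abs_nonneg t) (abs_cos_le_one _) |>.trans le_rfl
    have : Tendsto (fun x => Real.exp (-(t*x)) * ((|a| + |t|)/(t^2+a^2))) atTop (nhds 0) := by
      simpa using h1.mul_const ((|a| + |t|)/(t^2+a^2))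
    refine squeeze_zero_norm (fun x => ?_) this
    show |F x| ≤ _
    rw [show F x = Real.exp (-(t*x)) * ((a * Real.sin (a*x) - t * Real.cos (a*x)) / (t^2+a^2)) by
      simp [F, mul_div_assoc], abs_mul, abs_exp]
    exact mul_le_mul_of_nonneg_left (hb x) (le_of_lt (exp_pos _))
  have hcont : ContinuousWithinAt F (Ici 0) 0 := by
    apply Continuous.continuousWithinAt
    apply Continuous.div_const
    exact (Real.continuous_exp.comp (continuous_const.mul continuous_id).neg).mul
      ((continuous_const.mul (Real.continuous_sin.comp (continuous_const.mul continuous_id))).sub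
        (continuous_const.mul (Real.continuous_cos.comp (continuous_const.mul continuous_id))))
  have := integral_Ioi_of_hasDerivAt_of_tendsto hcont hderiv (integrable_exp_cos ht a) htend
  rw [this]
  simp [F]
  field_simp

lemma integrable_exp_neg_mul {t : ℝ} (ht : 0 < t) :
    IntegrableOn (fun x => Real.exp (-(t*x))) (Ioi 0) := by
  have := integrable_exp_cos ht 0
  simpa using this

lemma integral_exp_neg_mul {t : ℝ} (ht : 0 < t) :
    ∫ x in Ioi (0:ℝ), Real.exp (-(t*x)) = 1 / t := by
  have := integral_exp_cos ht 0
  simp only [zero_mul, Real.cos_zero, mul_one] at this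
  rw [this]
  field_simp
  ring

lemma integrable_one_sub_cos_exp {t : ℝ} (ht : 0 < t) (a : ℝ) :
    IntegrableOn (fun x => (1 - Real.cos (a*x)) * Real.exp (-(t*x))) (Ioi 0) := by
  have h1 := integrable_exp_neg_mul ht
  have h2 := integrable_exp_cos ht a
  have h3 := h1.sub h2
  exact h3.congr (Filter.Eventually.of_forall (fun x => by simp; ring))

lemma integral_one_sub_cos_exp {t : ℝ} (ht : 0 < t) (a : ℝ) :
    ∫ x in Ioi (0:ℝ), (1 - Real.cos (a*x)) * Real.exp (-(t*x))
      = a^2 / (t * (t^2 + a^2)) := by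
  have key : ∫ x in Ioi (0:ℝ), (1 - Real.cos (a*x)) * Real.exp (-(t*x))
      = (∫ x in Ioi (0:ℝ), Real.exp (-(t*x)))
        - ∫ x in Ioi (0:ℝ), Real.exp (-(t*x)) * Real.cos (a*x) := by
    rw [← integral_sub (integrable_exp_neg_mul ht) (integrable_exp_cos ht a)]
    exact setIntegral_congr_fun measurableSet_Ioi (fun x _ => by ring)
  rw [key, integral_exp_neg_mul ht, integral_exp_cos ht a]
  have h1 : t ≠ 0 := ne_of_gt ht
  have h2 : t^2 + a^2 ≠ 0 := by positivity
  field_simp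
  ring

lemma integrableOn_rpow_div_one_add_sq {σ : ℝ} (h0 : 0 < σ) (h2 : σ < 2) :
    IntegrableOn (fun u : ℝ => u^(σ-1) / (1+u^2)) (Ioi 0) := by
  have hsplit : Ioi (0:ℝ) = Ioc 0 1 ∪ Ioi 1 := (Ioc_union_Ioi_eq_Ioi zero_le_one).symm
  rw [hsplit]
  apply IntegrableOn.union
  · -- on Ioc 0 1, bound by u^(σ-1)
    have hbase : IntegrableOn (fun u : ℝ => u^(σ-1)) (Ioc 0 1) := by
      have := intervalIntegral.intervalIntegrable_rpow' (a := 0) (b := 1) (show (-1:ℝ) < σ-1 by linarith)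
      rwa [intervalIntegrable_iff_integrableOn_Ioc_of_le zero_le_one] at this
    refine hbase.mono' ?_ ?_
    · apply (ContinuousOn.aestronglyMeasurable ?_ measurableSet_Ioc)
      intro u hu
      exact ((Real.continuousAt_rpow_const u (σ-1) (Or.inl (ne_of_gt hu.1))).continuousWithinAt).div
        ((continuous_const.add (continuous_pow 2)).continuousWithinAt) (by positivity)
    · filter_upwards [ae_restrict_mem measurableSet_Ioc] with u hu
      rw [Real.norm_eq_abs, abs_div, abs_of_nonneg (Real.rpow_nonneg hu.1.le _),
        abs_of_pos (show (0:ℝ) < 1 + u^2 by positivity)]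
      exact div_le_self (Real.rpow_nonneg hu.1.le _) (by nlinarith [sq_nonneg u])
  · -- on Ioi 1, bound by u^(σ-3)
    have hbase : IntegrableOn (fun u : ℝ => u^(σ-3)) (Ioi 1) :=
      integrableOn_Ioi_rpow_of_lt (by linarith) one_pos
    refine hbase.mono' ?_ ?_
    · apply (ContinuousOn.aestronglyMeasurable ?_ measurableSet_Ioi)
      intro u hu
      have hu0 : u ≠ 0 := ne_of_gt (lt_trans one_pos hu)
      exact ((Real.continuousAt_rpow_const u (σ-1) (Or.inl hu0)).continuousWithinAt).div
        ((continuous_const.add (continuous_pow 2)).continuousWithinAt) (by positivity)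
    · filter_upwards [ae_restrict_mem measurableSet_Ioi] with u hu
      have hu0 : (0:ℝ) < u := lt_trans one_pos hu
      rw [Real.norm_eq_abs, abs_div, abs_of_nonneg (Real.rpow_nonneg hu0.le _),
        abs_of_pos (show (0:ℝ) < 1 + u^2 by positivity)]
      rw [div_le_iff₀ (by positivity)]
      calc u^(σ-1) = u^(σ-3) * u^(2:ℝ) := by
            rw [← Real.rpow_add hu0]; ring_nf
        _ = u^(σ-3) * u^2 := by rw [Real.rpow_two]
        _ ≤ u^(σ-3) * (1 + u^2) := by
            have := Real.rpow_nonneg hu0.le (σ-3)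
            nlinarith

lemma integral_rpow_div_one_add_sq {σ : ℝ} (h0 : 0 < σ) (h2 : σ < 2) :
    ∫ u in Ioi (0:ℝ), u^(σ-1) / (1+u^2) = π / (2 * Real.sin (π*σ/2)) := by
  set μ := volume.restrict (Ioi (0:ℝ)) with hμ
  set f : ℝ → ℝ → ℝ := fun u y => u^(σ-1) * Real.exp (-((1+u^2)*y)) with hf
  -- measurability on the product
  have hprod : μ.prod μ = (volume.prod volume).restrict ((Ioi (0:ℝ)) ×ˢ (Ioi (0:ℝ))) :=
    Measure.prod_restrict _ _
  have hmeas : AEStronglyMeasurable (Function.uncurry f) (μ.prod μ) := by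
    rw [hprod]
    refine ContinuousOn.aestronglyMeasurable ?_ (measurableSet_Ioi.prod measurableSet_Ioi)
    intro p hp
    have h1 : ContinuousWithinAt (fun q : ℝ × ℝ => q.1 ^ (σ-1)) ((Ioi (0:ℝ)) ×ˢ (Ioi (0:ℝ))) p :=
      ((Real.continuousAt_rpow_const p.1 (σ-1) (Or.inl (ne_of_gt hp.1))).comp
        continuousAt_fst).continuousWithinAt
    have h2 : ContinuousWithinAt (fun q : ℝ × ℝ => Real.exp (-((1+q.1^2)*q.2)))
        ((Ioi (0:ℝ)) ×ˢ (Ioi (0:ℝ))) p :=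
      (Real.continuous_exp.comp
        (((continuous_const.add (continuous_fst.pow 2)).mul continuous_snd).neg)).continuousWithinAt
    exact h1.mul h2
  -- inner y-integral
  have hinner : ∀ u ∈ Ioi (0:ℝ), ∫ y, f u y ∂μ = u^(σ-1) / (1+u^2) := by
    intro u hu
    have hr : (0:ℝ) < 1 + u^2 := by positivity
    rw [hμ, hf]
    simp only
    rw [MeasureTheory.integral_const_mul, integral_exp_neg_mul hr]
    ring
  have hinnerInt : ∀ u ∈ Ioi (0:ℝ), Integrable (fun y => f u y) μ := by
    intro u hu
    have hr : (0:ℝ) < 1 + u^2 := by positivity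
    exact (integrable_exp_neg_mul hr).const_mul _
  -- integrability on the product
  have hInt : Integrable (Function.uncurry f) (μ.prod μ) := by
    rw [integrable_prod_iff hmeas]
    constructor
    · filter_upwards [ae_restrict_mem measurableSet_Ioi] with u hu
      exact hinnerInt u hu
    · have heq : (fun u => ∫ y, ‖f u y‖ ∂μ) =ᵐ[μ] (fun u => u^(σ-1) / (1+u^2)) := by
        filter_upwards [ae_restrict_mem measurableSet_Ioi] with u hu
        have hnn : ∀ y, 0 ≤ f u y := fun y => by
          exact mul_nonneg (Real.rpow_nonneg (le_of_lt hu) _) (Real.exp_nonneg _)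
        rw [show (fun y => ‖f u y‖) = fun y => f u y from funext fun y => by
          rw [Real.norm_eq_abs, abs_of_nonneg (hnn y)]]
        exact hinner u hu
      exact (integrableOn_rpow_div_one_add_sq h0 h2).congr heq.symm
  -- swap
  have hswap := MeasureTheory.integral_integral_swap hInt
  have lhs_eq : ∫ u, ∫ y, f u y ∂μ ∂μ = ∫ u in Ioi (0:ℝ), u^(σ-1) / (1+u^2) :=
    setIntegral_congr_fun measurableSet_Ioi hinner
  -- inner u-integral after swap
  have hinner2 : ∀ y ∈ Ioi (0:ℝ), ∫ u, f u y ∂μ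
      = Real.exp (-y) * (y ^ (-σ/2) * (1/2) * Real.Gamma (σ/2)) := by
    intro y hy
    have hy0 : (0:ℝ) < y := hy
    have step1 : ∫ u, f u y ∂μ
        = ∫ u in Ioi (0:ℝ), Real.exp (-y) * (u^(σ-1) * Real.exp (-y * u^(2:ℝ))) := by
      refine setIntegral_congr_fun measurableSet_Ioi (fun u hu => ?_)
      have hu0 : (0:ℝ) < u := hu
      rw [hf]
      simp only
      rw [Real.rpow_two, show (-((1+u^2)*y)) = (-y) + (-y*u^2) by ring, Real.exp_add]
      ring
    rw [step1, MeasureTheory.integral_const_mul,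
      integral_rpow_mul_exp_neg_mul_rpow two_pos (by linarith : (-1:ℝ) < σ-1) hy0]
    norm_num
  have rhs_eq : ∫ y, ∫ u, f u y ∂μ ∂μ
      = (1/2) * Real.Gamma (σ/2) * Real.Gamma (1 - σ/2) := by
    rw [setIntegral_congr_fun measurableSet_Ioi hinner2]
    have : ∫ y in Ioi (0:ℝ), Real.exp (-y) * (y ^ (-σ/2) * (1/2) * Real.Gamma (σ/2))
        = (1/2) * Real.Gamma (σ/2) * ∫ y in Ioi (0:ℝ), Real.exp (-y) * y ^ ((1 - σ/2) - 1) := by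
      rw [← MeasureTheory.integral_const_mul]
      refine setIntegral_congr_fun measurableSet_Ioi (fun y hy => ?_)
      rw [show (1 - σ/2) - 1 = -σ/2 by ring]
      ring
    rw [this, ← Real.Gamma_eq_integral (by linarith : (0:ℝ) < 1 - σ/2)]
  have refl' : Real.Gamma (σ/2) * Real.Gamma (1 - σ/2) = π / Real.sin (π*σ/2) := by
    rw [Real.Gamma_mul_Gamma_one_sub]; ring_nf
  have hsinpos : 0 < Real.sin (π*σ/2) := by
    apply Real.sin_pos_of_pos_of_lt_pi
    · have := Real.pi_pos; positivity
    · nlinarith [Real.pi_pos]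
  calc ∫ u in Ioi (0:ℝ), u^(σ-1)/(1+u^2) = ∫ u, ∫ y, f u y ∂μ ∂μ := lhs_eq.symm
    _ = ∫ y, ∫ u, f u y ∂μ ∂μ := hswap
    _ = (1/2) * Real.Gamma (σ/2) * Real.Gamma (1-σ/2) := rhs_eq
    _ = π / (2 * Real.sin (π*σ/2)) := by
        rw [mul_assoc, refl']
        field_simp

lemma one_sub_cos_le_sq (x : ℝ) : 1 - Real.cos x ≤ x^2/2 := by
  have h1 : Real.cos x = 1 - 2 * Real.sin (x/2)^2 := by
    have := Real.cos_two_mul (x/2)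
    have hpy := Real.sin_sq_add_cos_sq (x/2)
    rw [show 2*(x/2) = x by ring] at this
    nlinarith
  have h2 : Real.sin (x/2)^2 ≤ (x/2)^2 := Real.sin_sq_le_sq
  nlinarith

lemma one_sub_cos_nonneg (x : ℝ) : 0 ≤ 1 - Real.cos x := by
  nlinarith [Real.cos_le_one x]

lemma one_sub_cos_le_two (x : ℝ) : 1 - Real.cos x ≤ 2 := by
  nlinarith [Real.neg_one_le_cos x]

lemma integrableOn_one_sub_cos_rpow {s : ℝ} (hs1 : 1 < s) (hs2 : s < 2) (a : ℝ) :
    IntegrableOn (fun x : ℝ => (1 - Real.cos (a*x)) * x^(-1-s)) (Ioi 0) := by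
  have hsplit : Ioi (0:ℝ) = Ioc 0 1 ∪ Ioi 1 := (Ioc_union_Ioi_eq_Ioi zero_le_one).symm
  rw [hsplit]
  apply IntegrableOn.union
  · have hbase : IntegrableOn (fun x : ℝ => a^2/2 * x^(1-s)) (Ioc 0 1) := by
      have := intervalIntegral.intervalIntegrable_rpow' (a := 0) (b := 1)
        (show (-1:ℝ) < 1-s by linarith)
      rw [intervalIntegrable_iff_integrableOn_Ioc_of_le zero_le_one] at this
      exact this.const_mul _
    refine hbase.mono' ?_ ?_
    · refine (ContinuousOn.aestronglyMeasurable ?_ measurableSet_Ioc)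
      intro x hx
      exact (continuous_const.sub (Real.continuous_cos.comp
        (continuous_const.mul continuous_id))).continuousWithinAt.mul
        ((Real.continuousAt_rpow_const x (-1-s) (Or.inl (ne_of_gt hx.1))).continuousWithinAt)
    · filter_upwards [ae_restrict_mem measurableSet_Ioc] with x hx
      have hx0 : (0:ℝ) < x := hx.1
      rw [Real.norm_eq_abs, abs_mul, abs_of_nonneg (one_sub_cos_nonneg _),
        abs_of_nonneg (Real.rpow_nonneg hx0.le _)]
      calc (1 - Real.cos (a*x)) * x^(-1-s) ≤ ((a*x)^2/2) * x^(-1-s) := by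
            exact mul_le_mul_of_nonneg_right (one_sub_cos_le_sq _) (Real.rpow_nonneg hx0.le _)
        _ = a^2/2 * (x^(2:ℝ) * x^(-1-s)) := by rw [Real.rpow_two]; ring
        _ = a^2/2 * x^(1-s) := by
            rw [← Real.rpow_add hx0]; ring_nf
  · have hbase : IntegrableOn (fun x : ℝ => 2 * x^(-1-s)) (Ioi 1) :=
      (integrableOn_Ioi_rpow_of_lt (by linarith) one_pos).const_mul _
    refine hbase.mono' ?_ ?_
    · refine (ContinuousOn.aestronglyMeasurable ?_ measurableSet_Ioi)
      intro x hx
      have hx0 : x ≠ 0 := ne_of_gt (lt_trans one_pos hx)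
      exact (continuous_const.sub (Real.continuous_cos.comp
        (continuous_const.mul continuous_id))).continuousWithinAt.mul
        ((Real.continuousAt_rpow_const x (-1-s) (Or.inl hx0)).continuousWithinAt)
    · filter_upwards [ae_restrict_mem measurableSet_Ioi] with x hx
      have hx0 : (0:ℝ) < x := lt_trans one_pos hx
      rw [Real.norm_eq_abs, abs_mul, abs_of_nonneg (one_sub_cos_nonneg _),
        abs_of_nonneg (Real.rpow_nonneg hx0.le _)]
      exact mul_le_mul_of_nonneg_right (one_sub_cos_le_two _) (Real.rpow_nonneg hx0.le _)

lemma integral_one_sub_cos_rpow {s : ℝ} (hs1 : 1 < s) (hs2 : s < 2) {a : ℝ} (ha : 0 < a) :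
    ∫ x in Ioi (0:ℝ), (1 - Real.cos (a*x)) * x^(-1-s)
      = a^s * (π / (2 * Real.Gamma (s+1) * Real.sin (π*s/2))) := by
  have hΓpos : 0 < Real.Gamma (s+1) := Real.Gamma_pos_of_pos (by linarith)
  set μ := volume.restrict (Ioi (0:ℝ)) with hμ
  set f : ℝ → ℝ → ℝ := fun x t => (1 - Real.cos (a*x)) * (t^s * Real.exp (-(x*t))) with hf
  have hprod : μ.prod μ = (volume.prod volume).restrict ((Ioi (0:ℝ)) ×ˢ (Ioi (0:ℝ))) :=
    Measure.prod_restrict _ _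
  have hmeas : AEStronglyMeasurable (Function.uncurry f) (μ.prod μ) := by
    rw [hprod]
    refine ContinuousOn.aestronglyMeasurable (Continuous.continuousOn ?_)
      (measurableSet_Ioi.prod measurableSet_Ioi)
    refine ((continuous_const.sub (Real.continuous_cos.comp
      (continuous_const.mul continuous_fst))).mul ?_)
    exact ((Real.continuous_rpow_const (by linarith : (0:ℝ) ≤ s)).comp continuous_snd).mul
      (Real.continuous_exp.comp (continuous_fst.mul continuous_snd).neg)
  -- inner t-integral
  have hinner : ∀ x ∈ Ioi (0:ℝ), ∫ t, f x t ∂μ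
      = (1 - Real.cos (a*x)) * x^(-1-s) * Real.Gamma (s+1) := by
    intro x hx
    have hx0 : (0:ℝ) < x := hx
    have key : ∫ t in Ioi (0:ℝ), t^s * Real.exp (-(x*t)) = (1/x)^(s+1) * Real.Gamma (s+1) := by
      have := integral_rpow_mul_exp_neg_mul_Ioi (show (0:ℝ) < s+1 by linarith) hx0
      simpa [show s+1-1 = s by ring] using this
    rw [hμ, hf]
    simp only
    rw [MeasureTheory.integral_const_mul, key]
    have : (1/x)^(s+1) = x^(-1-s) := by
      rw [one_div, Real.inv_rpow hx0.le, ← Real.rpow_neg hx0.le]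
      congr 1
      ring
    rw [this]; ring
  have hinnerInt : ∀ x ∈ Ioi (0:ℝ), Integrable (fun t => f x t) μ := by
    intro x hx
    have hx0 : (0:ℝ) < x := hx
    have hbase : IntegrableOn (fun t : ℝ => t^s * Real.exp (-(x*t))) (Ioi 0) := by
      have := integrableOn_rpow_mul_exp_neg_mul_rpow
        (show (-1:ℝ) < s by linarith) zero_lt_one hx0
      refine this.congr_fun (fun t ht => ?_) measurableSet_Ioi
      simp only [Real.rpow_one]; ring_nf
    exact hbase.const_mul _
  have hInt : Integrable (Function.uncurry f) (μ.prod μ) := by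
    rw [integrable_prod_iff hmeas]
    constructor
    · filter_upwards [ae_restrict_mem measurableSet_Ioi] with x hx
      exact hinnerInt x hx
    · have heq : (fun x => ∫ t, ‖f x t‖ ∂μ) =ᵐ[μ]
          (fun x => (1 - Real.cos (a*x)) * x^(-1-s) * Real.Gamma (s+1)) := by
        filter_upwards [ae_restrict_mem measurableSet_Ioi] with x hx
        have hnn : ∀ᵐ t ∂μ, 0 ≤ f x t := by
          filter_upwards [ae_restrict_mem measurableSet_Ioi] with t ht
          exact mul_nonneg (one_sub_cos_nonneg _)
            (mul_nonneg (Real.rpow_nonneg (le_of_lt ht) _) (Real.exp_nonneg _))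
        rw [← hinner x hx]
        refine integral_congr_ae ?_
        filter_upwards [hnn] with t ht
        rw [Real.norm_eq_abs, abs_of_nonneg ht]
      refine Integrable.congr ?_ heq.symm
      exact (integrableOn_one_sub_cos_rpow hs1 hs2 a).mul_const _
  -- swap
  have hswap := MeasureTheory.integral_integral_swap hInt
  have lhs_eq : ∫ x, ∫ t, f x t ∂μ ∂μ
      = (∫ x in Ioi (0:ℝ), (1 - Real.cos (a*x)) * x^(-1-s)) * Real.Gamma (s+1) := by
    rw [setIntegral_congr_fun measurableSet_Ioi hinner]
    exact MeasureTheory.integral_mul_const _ _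
  -- inner x-integral after swap
  have hinner2 : ∀ t ∈ Ioi (0:ℝ), ∫ x, f x t ∂μ = a^2 * t^(s-1) / (t^2+a^2) := by
    intro t ht
    have ht0 : (0:ℝ) < t := ht
    have step : ∫ x, f x t ∂μ
        = t^s * ∫ x in Ioi (0:ℝ), (1 - Real.cos (a*x)) * Real.exp (-(t*x)) := by
      rw [hμ, ← MeasureTheory.integral_const_mul]
      refine setIntegral_congr_fun measurableSet_Ioi (fun x hx => ?_)
      rw [hf]
      simp only
      rw [mul_comm x t]
      ring
    rw [step, integral_one_sub_cos_exp ht0 a]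
    have hts : t^s = t^(s-1) * t := by
      rw [← Real.rpow_add_one (ne_of_gt ht0) (s-1)]; norm_num
    rw [hts]
    have h1 : t^2 + a^2 ≠ 0 := by positivity
    field_simp
  have rhs_eq : ∫ t, ∫ x, f x t ∂μ ∂μ
      = a^s * (π / (2 * Real.sin (π*s/2))) := by
    rw [setIntegral_congr_fun measurableSet_Ioi hinner2]
    have hsub := integral_comp_mul_left_Ioi
      (fun t : ℝ => a^2 * t^(s-1) / (t^2+a^2)) 0 ha
    rw [mul_zero] at hsub
    have hgav : ∀ u ∈ Ioi (0:ℝ), a^2 * (a*u)^(s-1) / ((a*u)^2+a^2)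
        = a^(s-1) * (u^(s-1) / (1+u^2)) := by
      intro u hu
      have hu0 : (0:ℝ) < u := hu
      rw [Real.mul_rpow ha.le hu0.le]
      have hden : (a*u)^2 + a^2 = a^2 * (1 + u^2) := by ring
      rw [hden]
      have ha2 : (a:ℝ)^2 ≠ 0 := by positivity
      field_simp
    have hsub2 : ∫ u in Ioi (0:ℝ), a^2 * (a*u)^(s-1) / ((a*u)^2+a^2)
        = a^(s-1) * (π / (2 * Real.sin (π*s/2))) := by
      rw [setIntegral_congr_fun measurableSet_Ioi hgav, MeasureTheory.integral_const_mul,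
        integral_rpow_div_one_add_sq (by linarith) hs2]
    rw [hsub2] at hsub
    rw [smul_eq_mul] at hsub
    have : ∫ t in Ioi (0:ℝ), a^2 * t^(s-1) / (t^2+a^2)
        = a * (a^(s-1) * (π / (2 * Real.sin (π*s/2)))) := by
      have ha0 : a ≠ 0 := ne_of_gt ha
      field_simp at hsub
      rw [show π*s/2 = s*π/2 by ring, eq_div_of_mul_eq two_ne_zero ((mul_comm _ _).trans hsub.symm)]; ring
    have haa : a^s = a^(s-1) * a := by
      rw [← Real.rpow_add_one (ne_of_gt ha) (s-1)]; norm_num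
    rw [this, haa]
    ring
  -- combine
  have key : (∫ x in Ioi (0:ℝ), (1 - Real.cos (a*x)) * x^(-1-s)) * Real.Gamma (s+1)
      = a^s * (π / (2 * Real.sin (π*s/2))) := by
    rw [← lhs_eq, hswap, rhs_eq]
  have hsinpos : 0 < Real.sin (π*s/2) := by
    apply Real.sin_pos_of_pos_of_lt_pi
    · have := Real.pi_pos; positivity
    · nlinarith [Real.pi_pos]
  have hΓ : Real.Gamma (s+1) ≠ 0 := ne_of_gt hΓpos
  field_simp at key ⊢
  linarith [key]

/-- The classical integral formula: for `H ∈ (1/2, 1)` and `θ, w > 0`,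
`∫ sin(θ|ξ|) sin(w|ξ|) |ξ|^{-1-2H} dξ = ((θ+w)^{2H} - |θ-w|^{2H})/(4 c_H)`,
where `c_H = Γ(2H+1) sin(πH)/(2π)`. -/
theorem stmt_8 (H : ℝ) (h1 : 1 / 2 < H) (h2 : H < 1) (θ w : ℝ) (hθ : 0 < θ) (hw : 0 < w) :
    (∫ ξ : ℝ, Real.sin (θ * |ξ|) * Real.sin (w * |ξ|) * |ξ| ^ (-1 - 2 * H))
      = ((θ + w) ^ (2 * H) - |θ - w| ^ (2 * H))
        / (4 * (Gamma (2 * H + 1) * Real.sin (π * H) / (2 * π))) := by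
  set s : ℝ := 2 * H with hs
  have hs1 : 1 < s := by rw [hs]; linarith
  have hs2 : s < 2 := by rw [hs]; linarith
  set K : ℝ := π / (2 * Real.Gamma (s+1) * Real.sin (π*s/2)) with hK
  -- step 1 : reduce to Ioi 0
  have step1 : (∫ ξ : ℝ, Real.sin (θ * |ξ|) * Real.sin (w * |ξ|) * |ξ| ^ (-1 - 2 * H))
      = 2 * ∫ x in Ioi (0:ℝ), Real.sin (θ*x) * Real.sin (w*x) * x ^ (-1-s) :=
    integral_comp_abs (f := fun x => Real.sin (θ*x) * Real.sin (w*x) * x ^ (-1-s))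
  -- step 2 : product-to-sum
  have hpt : ∀ x : ℝ, Real.sin (θ*x) * Real.sin (w*x) * x ^ (-1-s)
      = ((1 - Real.cos ((θ+w)*x)) * x^(-1-s) - (1 - Real.cos ((|θ-w|) * x)) * x^(-1-s)) / 2 := by
    intro x
    have hcosabs : Real.cos ((|θ-w|) * x) = Real.cos ((θ-w)*x) := by
      rcases abs_cases (θ-w) with ⟨h, _⟩ | ⟨h, _⟩
      · rw [h]
      · rw [h, neg_mul, Real.cos_neg]
    rw [hcosabs, show (θ-w)*x = θ*x - w*x by ring, show (θ+w)*x = θ*x + w*x by ring,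
      Real.cos_sub, Real.cos_add]
    ring
  have step2 : (∫ x in Ioi (0:ℝ), Real.sin (θ*x) * Real.sin (w*x) * x ^ (-1-s))
      = ((∫ x in Ioi (0:ℝ), (1 - Real.cos ((θ+w)*x)) * x^(-1-s))
        - ∫ x in Ioi (0:ℝ), (1 - Real.cos ((|θ-w|) * x)) * x^(-1-s)) / 2 := by
    rw [← integral_sub (integrableOn_one_sub_cos_rpow hs1 hs2 (θ+w))
      (integrableOn_one_sub_cos_rpow hs1 hs2 |θ-w|), ← MeasureTheory.integral_div]
    exact setIntegral_congr_fun measurableSet_Ioi (fun x _ => hpt x)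
  -- step 3 : evaluate the two integrals
  have hIsum : ∫ x in Ioi (0:ℝ), (1 - Real.cos ((θ+w)*x)) * x^(-1-s) = (θ+w)^s * K :=
    integral_one_sub_cos_rpow hs1 hs2 (by linarith)
  have hIdiff : ∫ x in Ioi (0:ℝ), (1 - Real.cos ((|θ-w|) * x)) * x^(-1-s) = |θ-w|^s * K := by
    rcases eq_or_lt_of_le (abs_nonneg (θ-w)) with h | h
    · rw [← h]
      simp only [zero_mul, Real.cos_zero, sub_self]
      rw [Real.zero_rpow (by linarith : s ≠ 0)]
      simp
    · exact integral_one_sub_cos_rpow hs1 hs2 h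
  rw [step1, step2, hIsum, hIdiff]
  -- final algebra
  have hsinH : Real.sin (π*s/2) = Real.sin (π*H) := by rw [hs]; ring_nf
  have hsinpos : 0 < Real.sin (π*H) := by
    apply Real.sin_pos_of_pos_of_lt_pi
    · have := Real.pi_pos; positivity
    · nlinarith [Real.pi_pos]
  have hΓpos : 0 < Real.Gamma (s+1) := Real.Gamma_pos_of_pos (by linarith)
  have hπ : (0:ℝ) < π := Real.pi_pos
  rw [hK, hsinH, hs]
  have hΓ' : Real.Gamma (2*H+1) ≠ 0 := by rw [← hs]; exact ne_of_gt hΓpos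
  field_simp
  ring
end
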